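/- Let {f_t}_{t∈[0,1]} be a continuous full family of C¹ unimodal maps, let n be even, and let V be a periodic point component of G_n^{−1}(0) of period n with min{ per(x) : (t,x) ∈ V } = n/2. Then: (1) for any (t₁,p₁), (t₂,p₂) ∈ V with per(p₁) = per(p₂) = n, the shuffle classes satisfy [σ(p₁)] = [σ(p₂)]; (2) if (s,p) ∈ V, the orbit of p under f_s does not contain the critical point 0, and the minimal period of I(p,f_s) is n, then the minimal period of μ(I(p,f_s)) is n/2. -/

import Mathlib

/-- A `C¹` unimodal map: `f' > 0` on `(-∞,0)`, `f' < 0` on `(0,∞)`, `f' 0 = 0`. -/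
def Unimodal (f : ℝ → ℝ) : Prop :=
  ContDiff ℝ 1 f ∧ (∀ x < (0 : ℝ), 0 < deriv f x) ∧
    (∀ x > (0 : ℝ), deriv f x < 0) ∧ deriv f 0 = 0

/-- A `C¹` unimodal map is a horseshoe: it has exactly two fixed points, the left
one being `a`, and there are `a < a₁ < b₁ < b` with `f b = a`, `f a₁ = f b₁ = b`
and `|f'| > 1` on `[a,a₁] ∪ [b₁,b]`. -/
def Horseshoe (f : ℝ → ℝ) : Prop :=
  Unimodal f ∧ ∃ a c : ℝ, a < c ∧ {x : ℝ | f x = x} = {a, c} ∧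
    ∃ a₁ b₁ b : ℝ, a < a₁ ∧ a₁ < b₁ ∧ b₁ < b ∧ f b = a ∧ f a₁ = b ∧ f b₁ = b ∧
      ∀ x ∈ Set.Icc a a₁ ∪ Set.Icc b₁ b, 1 < |deriv f x|

/-- A continuous full family of `C¹` unimodal maps `f t`, `t ∈ [0,1]`:
`(t,x) ↦ f t x` and `(t,x) ↦ (f t)' x` are continuous on `[0,1] × ℝ`, each `f t`
is unimodal, `f 0` has no fixed point, `f 1` is a horseshoe, and there is `M > 0`
such that all fixed points of every `f t` lie in `[-M, M]`. -/
def ContFullFamily (f : ℝ → ℝ → ℝ) : Prop :=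
  (∀ t ∈ Set.Icc (0 : ℝ) 1, Unimodal (f t)) ∧
  ContinuousOn (fun p : ℝ × ℝ => f p.1 p.2) (Set.Icc (0 : ℝ) 1 ×ˢ Set.univ) ∧
  ContinuousOn (fun p : ℝ × ℝ => deriv (f p.1) p.2) (Set.Icc (0 : ℝ) 1 ×ˢ Set.univ) ∧
  (∀ x : ℝ, f 0 x ≠ x) ∧
  Horseshoe (f 1) ∧
  (∃ M > (0 : ℝ), ∀ t ∈ Set.Icc (0 : ℝ) 1, ∀ x : ℝ, f t x = x → x ∈ Set.Icc (-M) M)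

open scoped Classical in
/-- The quotient map `G_m` of the family: for odd `m`, `G_m (t,x) = f_t^m x - x`;
for even `m = 2n`, it is `(f_t^{2n} x - x)/(f_t^n x - x)` off the fixed-point set
of `f_t^n`, and `(f_t^n)' x + 1` on it. -/
noncomputable def Gmap (f : ℝ → ℝ → ℝ) (m : ℕ) (t x : ℝ) : ℝ :=
  if Odd m then (f t)^[m] x - x
  else if (f t)^[m / 2] x = x then deriv ((f t)^[m / 2]) x + 1
  else ((f t)^[m] x - x) / ((f t)^[m / 2] x - x)

/-- The zero set `G_m⁻¹(0) ⊆ [0,1] × ℝ`. -/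
def Zset (f : ℝ → ℝ → ℝ) (m : ℕ) : Set (ℝ × ℝ) :=
  {p : ℝ × ℝ | p.1 ∈ Set.Icc (0 : ℝ) 1 ∧ Gmap f m p.1 p.2 = 0}

/-- `V` is a periodic point component of period-`m` data: a connected component
of `G_m⁻¹(0)`. -/
def IsPPComponent (f : ℝ → ℝ → ℝ) (m : ℕ) (V : Set (ℝ × ℝ)) : Prop :=
  ∃ p ∈ Zset f m, V = connectedComponentIn (Zset f m) p

/-- The period of a periodic point component `V` is `n`: the maximum of the
minimal periods of its points is `n`. -/
def CompPeriod (f : ℝ → ℝ → ℝ) (V : Set (ℝ × ℝ)) (n : ℕ) : Prop :=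
  (∀ p ∈ V, Function.minimalPeriod (f p.1) p.2 ≤ n) ∧
  (∃ p ∈ V, Function.minimalPeriod (f p.1) p.2 = n)

/-- Admissible sequences are functions `ℕ → Bool`, with `false = L`, `true = R`.
`shiftSeq k A` is the `k`-fold shift `S^k A`. -/
def shiftSeq (k : ℕ) (A : ℕ → Bool) : ℕ → Bool := fun i => A (i + k)

/-- The block `A_0 ⋯ A_{n-1}` is even: it contains an even number of `R`'s. -/
def BlockEven (A : ℕ → Bool) (n : ℕ) : Prop :=
  Even ((Finset.range n).filter fun i => A i = true).card

/-- The order on admissible sequences: `A < B` iff at the first index `n` of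
disagreement, either `A_0 ⋯ A_{n-1}` is even and `A n = L < R = B n`, or it is
odd and `A n = R > L = B n`. -/
def SeqLT (A B : ℕ → Bool) : Prop :=
  ∃ n : ℕ, (∀ i < n, A i = B i) ∧ A n ≠ B n ∧
    ((BlockEven A n ∧ A n = false ∧ B n = true) ∨
     (¬ BlockEven A n ∧ A n = true ∧ B n = false))

def SeqLE (A B : ℕ → Bool) : Prop := SeqLT A B ∨ A = B

/-- `A` is maximal: `S^k A ≤ A` for all `k ≥ 0`. -/
def SeqMaximal (A : ℕ → Bool) : Prop := ∀ k : ℕ, SeqLE (shiftSeq k A) A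

/-- `A` is periodic of period `n > 0`. -/
def IsPeriodicSeq (A : ℕ → Bool) (n : ℕ) : Prop := 0 < n ∧ ∀ i, A (i + n) = A i

/-- The minimal period of `A` (and `0` if `A` is not periodic). -/
noncomputable def minPer (A : ℕ → Bool) : ℕ := sInf {n : ℕ | IsPeriodicSeq A n}

/-- Flip (`L ↔ R`) the symbol of `A` at every position congruent to `n - 1`
modulo `n`. -/
def flipAt (n : ℕ) (A : ℕ → Bool) : ℕ → Bool :=
  fun i => if i % n = n - 1 then !(A i) else A i

/-- The map `μ` on periodic admissible sequences: if `n` is the minimal period of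
`A` and `m` (with `0 ≤ m ≤ n-1`) is the unique integer such that `S^m A` is
maximal, then `μ A = S^{n-m} B`, where `B` is obtained from `S^m A` by flipping
the symbol at every position congruent to `n - 1` modulo `n`. -/
noncomputable def muSeq (A : ℕ → Bool) : ℕ → Bool :=
  shiftSeq (minPer A - sInf {m : ℕ | SeqMaximal (shiftSeq m A)})
    (flipAt (minPer A)
      (shiftSeq (sInf {m : ℕ | SeqMaximal (shiftSeq m A)}) A))

/-- The map `ν`: `ν A = μ A` if `per (μ A) = per A`, and `ν A = S^{per A / 2} A`
otherwise. -/
noncomputable def nuSeq (A : ℕ → Bool) : ℕ → Bool :=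
  if minPer (muSeq A) = minPer A then muSeq A else shiftSeq (minPer A / 2) A

open scoped Classical in
/-- The itinerary `I(x, f)` of a point whose orbit avoids `0`: the `i`-th symbol
is `R` (`true`) if `f^[i] x > 0` and `L` (`false`) if `f^[i] x < 0`. -/
noncomputable def itinerary (f : ℝ → ℝ) (x : ℝ) : ℕ → Bool :=
  fun i => if 0 < f^[i] x then true else false

/-- `p` and `q` (periodic points of minimal period `n` of `f` and `g`
respectively) have the same shuffle `σ(p) = σ(q)`: the orderings of their orbits
agree. -/
def SameShuffle (f g : ℝ → ℝ) (p q : ℝ) (n : ℕ) : Prop :=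
  ∀ i j : ℕ, i < n → j < n → (f^[i] p < f^[j] p ↔ g^[i] q < g^[j] q)

open Set Function

/-- Dichotomy on a preconnected set from local stability of two complementary conditions. -/
lemma preconn_dichotomy {X : Type*} [MetricSpace X] {V U₁ U₂ : Set X}
    (hV : IsPreconnected V) (hcov : ∀ v ∈ V, v ∈ U₁ ∨ v ∈ U₂)
    (hdisj : ∀ v ∈ V, v ∈ U₁ → v ∈ U₂ → False)
    (h1 : ∀ v ∈ V, v ∈ U₁ → ∃ δ > 0, ∀ w ∈ V, dist w v < δ → w ∈ U₁)
    (h2 : ∀ v ∈ V, v ∈ U₂ → ∃ δ > 0, ∀ w ∈ V, dist w v < δ → w ∈ U₂) :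
    (∀ v ∈ V, v ∈ U₁) ∨ (∀ v ∈ V, v ∈ U₂) := by
  classical
  by_contra hc
  push_neg at hc
  obtain ⟨⟨v₂, hv₂V, hv₂⟩, ⟨v₁, hv₁V, hv₁⟩⟩ := hc
  have hv₁U : v₁ ∈ U₁ := (hcov v₁ hv₁V).resolve_right hv₁
  have hv₂U : v₂ ∈ U₂ := (hcov v₂ hv₂V).resolve_left hv₂
  set O₁ : Set X := {w | ∃ v ∈ V, v ∈ U₁ ∧ ∃ δ > 0, (∀ u ∈ V, dist u v < δ → u ∈ U₁) ∧ dist w v < δ} with hO₁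
  set O₂ : Set X := {w | ∃ v ∈ V, v ∈ U₂ ∧ ∃ δ > 0, (∀ u ∈ V, dist u v < δ → u ∈ U₂) ∧ dist w v < δ} with hO₂
  have hopen : ∀ (U : Set X) (O : Set X), O = {w | ∃ v ∈ V, v ∈ U ∧ ∃ δ > 0, (∀ u ∈ V, dist u v < δ → u ∈ U) ∧ dist w v < δ} → IsOpen O := by
    intro U O hOdef
    rw [Metric.isOpen_iff]
    rintro w hw
    rw [hOdef] at hw
    obtain ⟨v, hvV, hvU, δ, hδ, hloc, hdist⟩ := hw
    refine ⟨δ - dist w v, by linarith, fun u hu => ?_⟩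
    rw [Metric.mem_ball] at hu
    rw [hOdef]
    exact ⟨v, hvV, hvU, δ, hδ, hloc, by
      have := dist_triangle u w v
      linarith⟩
  have hmem : ∀ (U : Set X) (O : Set X), O = {w | ∃ v ∈ V, v ∈ U ∧ ∃ δ > 0, (∀ u ∈ V, dist u v < δ → u ∈ U) ∧ dist w v < δ} →
      (∀ v ∈ V, v ∈ U → ∃ δ > 0, ∀ u ∈ V, dist u v < δ → u ∈ U) → ∀ v ∈ V, v ∈ U → v ∈ O := by
    intro U O hOdef hloc v hvV hvU
    obtain ⟨δ, hδ, hl⟩ := hloc v hvV hvU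
    rw [hOdef]
    exact ⟨v, hvV, hvU, δ, hδ, hl, by simpa using hδ⟩
  have hsubU : ∀ (U : Set X) (O : Set X), O = {w | ∃ v ∈ V, v ∈ U ∧ ∃ δ > 0, (∀ u ∈ V, dist u v < δ → u ∈ U) ∧ dist w v < δ} →
      ∀ w ∈ V, w ∈ O → w ∈ U := by
    intro U O hOdef w hwV hwO
    rw [hOdef] at hwO
    obtain ⟨v, hvV, hvU, δ, hδ, hloc, hdist⟩ := hwO
    exact hloc w hwV hdist
  obtain ⟨w, hwV, hw₁, hw₂⟩ := hV O₁ O₂ (hopen U₁ O₁ hO₁) (hopen U₂ O₂ hO₂)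
    (fun v hv => by
      rcases hcov v hv with h | h
      · exact Or.inl (hmem U₁ O₁ hO₁ h1 v hv h)
      · exact Or.inr (hmem U₂ O₂ hO₂ h2 v hv h))
    ⟨v₁, hv₁V, hmem U₁ O₁ hO₁ h1 v₁ hv₁V hv₁U⟩
    ⟨v₂, hv₂V, hmem U₂ O₂ hO₂ h2 v₂ hv₂V hv₂U⟩
  exact hdisj w hwV (hsubU U₁ O₁ hO₁ w hwV hw₁) (hsubU U₂ O₂ hO₂ w hwV hw₂)

/-- Mean value theorem for distinct points, both orders. -/
lemma mvt_pair {g : ℝ → ℝ} (hg : ContDiff ℝ 1 g) {a b : ℝ} (hab : a ≠ b) :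
    ∃ ξ, ξ ∈ Ioo (min a b) (max a b) ∧ g a - g b = deriv g ξ * (a - b) := by
  have hdiff : Differentiable ℝ g := hg.differentiable one_ne_zero
  rcases lt_or_gt_of_ne hab with h | h
  · obtain ⟨c, hc, hceq⟩ := exists_hasDerivAt_eq_slope g (deriv g) h
      (hdiff.continuous.continuousOn) (fun x _ => (hdiff x).hasDerivAt)
    refine ⟨c, by rwa [min_eq_left h.le, max_eq_right h.le], ?_⟩
    have hne : b - a ≠ 0 := by linarith
    have h2 : deriv g c * (b - a) = g b - g a := by
      rw [hceq]; field_simp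
    nlinarith [h2]
  · obtain ⟨c, hc, hceq⟩ := exists_hasDerivAt_eq_slope g (deriv g) h
      (hdiff.continuous.continuousOn) (fun x _ => (hdiff x).hasDerivAt)
    refine ⟨c, by rwa [min_eq_right h.le, max_eq_left h.le], ?_⟩
    have hne : a - b ≠ 0 := by intro h0; exact hab (by linarith)
    have h2 : deriv g c * (a - b) = g a - g b := by
      rw [hceq]; field_simp
    linarith [h2]

/-- Derivative of an iterate as a product. -/
lemma iterate_hasDerivAt {g : ℝ → ℝ} (hg : ContDiff ℝ 1 g) (m : ℕ) (x : ℝ) :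
    HasDerivAt (g^[m]) (∏ j ∈ Finset.range m, deriv g (g^[j] x)) x := by
  induction m with
  | zero => simpa using hasDerivAt_id x
  | succ m ih =>
      have hdiff : Differentiable ℝ g := hg.differentiable one_ne_zero
      have h1 : HasDerivAt g (deriv g (g^[m] x)) (g^[m] x) := (hdiff _).hasDerivAt
      have := h1.comp x ih
      rw [Finset.prod_range_succ]
      have heq : g ∘ g^[m] = g^[m+1] := by
        funext y; simp [Function.iterate_succ_apply']
      rw [heq] at this
      rw [mul_comm]
      exact this

lemma deriv_iterate_eq {g : ℝ → ℝ} (hg : ContDiff ℝ 1 g) (m : ℕ) (x : ℝ) :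
    deriv (g^[m]) x = ∏ j ∈ Finset.range m, deriv g (g^[j] x) :=
  (iterate_hasDerivAt hg m x).deriv

/-- Positivity of a product vs parity of negative factors. -/
lemma prod_pos_iff_even_neg (g : ℕ → ℝ) (m : ℕ) (hne : ∀ j < m, g j ≠ 0) :
    (0 < ∏ j ∈ Finset.range m, g j ↔ Even ((Finset.range m).filter (fun j => g j < 0)).card) := by
  induction m with
  | zero => simp
  | succ m ih =>
      have ih' := ih (fun j hj => hne j (by omega))
      rw [Finset.prod_range_succ, Finset.range_add_one, Finset.filter_insert]
      have hgm := hne m (by omega)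
      rcases lt_or_gt_of_ne hgm with h | h
      · rw [if_pos h, Finset.card_insert_of_notMem (by simp)]
        rw [Nat.even_add_one]
        constructor
        · intro hp
          intro he
          have : 0 < ∏ j ∈ Finset.range m, g j := by rw [ih']; exact he
          nlinarith
        · intro hp
          have : ¬ (0 < ∏ j ∈ Finset.range m, g j) := by rw [ih']; exact hp
          have hne' : ∏ j ∈ Finset.range m, g j ≠ 0 := Finset.prod_ne_zero_iff.2 (fun j hj => hne j (by simp at hj; omega))
          have : ∏ j ∈ Finset.range m, g j < 0 := lt_of_le_of_ne (not_lt.1 this) hne'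
          nlinarith
      · rw [if_neg (by linarith)]
        rw [← ih']
        constructor
        · intro hp
          nlinarith
        · intro hp
          nlinarith

lemma umono {g : ℝ → ℝ} (hg : ContDiff ℝ 1 g) (hpos : ∀ x < (0:ℝ), 0 < deriv g x) :
    StrictMonoOn g (Iic 0) := by
  apply strictMonoOn_of_deriv_pos (convex_Iic 0) (hg.continuous.continuousOn)
  intro x hx
  rw [interior_Iic] at hx
  exact hpos x hx

lemma uanti {g : ℝ → ℝ} (hg : ContDiff ℝ 1 g) (hneg : ∀ x > (0:ℝ), deriv g x < 0) :
    StrictAntiOn g (Ici 0) := by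
  apply strictAntiOn_of_deriv_neg (convex_Ici 0) (hg.continuous.continuousOn)
  intro x hx
  rw [interior_Ici] at hx
  exact hneg x hx

lemma sign_split {a b : ℝ} {c : Prop} (ha : a ≠ 0) (hb : b ≠ 0) (h : 0 < a * b ↔ c) :
    (0 < a ↔ (0 < b ↔ c)) := by
  rcases lt_or_gt_of_ne ha with ha' | ha' <;> rcases lt_or_gt_of_ne hb with hb' | hb'
  · have hc : c := h.1 (mul_pos_of_neg_of_neg ha' hb')
    have h1 : ¬ 0 < a := not_lt.2 ha'.le
    have h2 : ¬ 0 < b := not_lt.2 hb'.le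
    tauto
  · have hc : ¬ c := fun hcc => absurd (h.2 hcc) (not_lt.2 (mul_nonpos_of_nonpos_of_nonneg ha'.le hb'.le))
    have h1 : ¬ 0 < a := not_lt.2 ha'.le
    tauto
  · have hc : ¬ c := fun hcc => absurd (h.2 hcc) (not_lt.2 (mul_nonpos_of_nonneg_of_nonpos ha'.le hb'.le))
    have h2 : ¬ 0 < b := not_lt.2 hb'.le
    tauto
  · have hc : c := h.1 (mul_pos ha' hb')
    tauto

lemma sub_pos_flip {a b : ℝ} (h : a ≠ b) : 0 < b - a ↔ ¬ (0 < a - b) := by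
  rcases lt_or_gt_of_ne h with h' | h'
  · exact ⟨fun _ hh => by linarith, fun _ => by linarith⟩
  · exact ⟨fun hh => absurd hh (by linarith), fun hh => absurd (by linarith : 0 < a - b) hh⟩

lemma pair_case {k i j : ℕ} (hk : 0 < k) (hi : i < k + k) (hj : j < k + k)
    (hij : i ≠ j) (hm : i % k = j % k) : j = i + k ∨ i = j + k := by
  rcases Nat.lt_or_ge i j with h | h
  · left
    have hdvd : k ∣ j - i := (Nat.modEq_iff_dvd' h.le).1 hm
    obtain ⟨c, hc⟩ := hdvd
    rcases Nat.lt_or_ge c 2 with hc2 | hc2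
    · interval_cases c <;> omega
    · have : 2 * k ≤ k * c := by
        calc 2 * k = k * 2 := by ring
        _ ≤ k * c := Nat.mul_le_mul_left k hc2
      omega
  · have h' : j < i := by omega
    right
    have hdvd : k ∣ i - j := (Nat.modEq_iff_dvd' h'.le).1 hm.symm
    obtain ⟨c, hc⟩ := hdvd
    rcases Nat.lt_or_ge c 2 with hc2 | hc2
    · interval_cases c <;> omega
    · have : 2 * k ≤ k * c := by
        calc 2 * k = k * 2 := by ring
        _ ≤ k * c := Nat.mul_le_mul_left k hc2
      omega

lemma iff_cancel {P₁ P₂ c : Prop} : ((P₁ ↔ c) ↔ (P₂ ↔ c)) ↔ (P₁ ↔ P₂) := by tauto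

lemma not_iff_left {P Q : Prop} (h : ¬(P ↔ Q)) : ((¬ P) ↔ Q) := by tauto

lemma not_iff_right {P Q : Prop} (h : ¬(P ↔ Q)) : (P ↔ ¬ Q) := by tauto

lemma lt_iff_q {a b c d : ℝ} (h : (0 < b - a) ↔ (0 < d - c)) : (a < b ↔ c < d) :=
  ⟨fun hh => by have := h.1 (by linarith); linarith,
   fun hh => by have := h.2 (by linarith); linarith⟩

lemma mod_two_cases {k r i₀ : ℕ} (hk : 0 < k) (hr : r < k + k) (h : r % k = i₀) :
    r = i₀ ∨ r = i₀ + k := by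
  have hd : r / k < 2 := by rw [Nat.div_lt_iff_lt_mul hk]; omega
  have hdm := Nat.div_add_mod r k
  have hd2 : r / k = 0 ∨ r / k = 1 := Nat.le_one_iff_eq_zero_or_eq_one.1 (by omega)
  rcases hd2 with h0 | h1
  · rw [h0] at hdm; left; omega
  · rw [h1] at hdm; right; omega

lemma flip_cond_iff {n m₀ : ℕ} (hn : 0 < n) (hm : m₀ < n) (x : ℕ) :
    (x % n = n - 1) ↔ ((x + m₀ + 1) % n = m₀) := by
  constructor
  · intro h
    have hdm := Nat.div_add_mod' x n
    have h2 : x + m₀ + 1 = m₀ + (x / n + 1) * n := by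
      have h3 : (x / n + 1) * n = x / n * n + n := by ring
      omega
    rw [h2, Nat.add_mul_mod_self_right]
    exact Nat.mod_eq_of_lt hm
  · intro h
    have hr := Nat.mod_lt x hn
    have hdm := Nat.div_add_mod x n
    have h2 : (x + m₀ + 1) % n = (x % n + m₀ + 1) % n := by
      conv_lhs => rw [← hdm]
      rw [show n * (x / n) + x % n + m₀ + 1 = (x % n + m₀ + 1) + (x/n) * n by ring,
        Nat.add_mul_mod_self_right]
    rw [h2] at h
    rcases Nat.lt_or_ge (x % n + m₀ + 1) n with hlt | hge
    · rw [Nat.mod_eq_of_lt hlt] at h; omega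
    · have h3 : (x % n + m₀ + 1) % n = x % n + m₀ + 1 - n := by
        rw [Nat.mod_eq_sub_mod hge, Nat.mod_eq_of_lt (by omega)]
      omega

lemma addk_mod {k n l : ℕ} (hk : 0 < k) (hn2 : n = k + k) :
    ((l % n < k) → (l + k) % n = l % n + k) ∧ ((k ≤ l % n) → (l + k) % n = l % n - k) := by
  have h1 : (l + k) % n = (l % n + k) % n := by
    conv_lhs => rw [← Nat.div_add_mod l n]
    rw [show n * (l / n) + l % n + k = (l % n + k) + (l/n) * n by ring,
      Nat.add_mul_mod_self_right]
  have hr : l % n < n := Nat.mod_lt _ (by omega)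
  constructor
  · intro h; rw [h1, Nat.mod_eq_of_lt (by omega)]
  · intro h; rw [h1, Nat.mod_eq_sub_mod (by omega), Nat.mod_eq_of_lt (by omega)]; omega

lemma not_sub_pos_lt {a b : ℝ} (h : a ≠ b) (h2 : ¬ 0 < a - b) : a < b :=
  lt_of_le_of_ne (by linarith [not_lt.1 h2]) h
section SeqLemmas

lemma blockEven_zero (A : ℕ → Bool) : BlockEven A 0 := by simp [BlockEven]

lemma blockEven_succ_true {A : ℕ → Bool} {i : ℕ} (h : A i = true) :
    (BlockEven A (i+1) ↔ ¬ BlockEven A i) := by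
  unfold BlockEven
  rw [Finset.range_add_one, Finset.filter_insert, if_pos h,
    Finset.card_insert_of_notMem (by simp), Nat.even_add_one]

lemma blockEven_succ_false {A : ℕ → Bool} {i : ℕ} (h : A i = false) :
    (BlockEven A (i+1) ↔ BlockEven A i) := by
  unfold BlockEven
  rw [Finset.range_add_one, Finset.filter_insert, if_neg (by simp [h])]

lemma blockEven_congr {A B : ℕ → Bool} {r : ℕ} (h : ∀ i < r, A i = B i) :
    (BlockEven A r ↔ BlockEven B r) := by
  unfold BlockEven
  rw [Finset.filter_congr (fun i hi => by rw [h i (Finset.mem_range.1 hi)])]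

lemma seqLT_asymm {A B : ℕ → Bool} (h1 : SeqLT A B) (h2 : SeqLT B A) : False := by
  obtain ⟨r, hag, hne, hcs⟩ := h1
  obtain ⟨r', hag', hne', hcs'⟩ := h2
  rcases lt_trichotomy r r' with h | h | h
  · exact hne (hag' r h).symm
  · subst h
    have hBE : BlockEven A r ↔ BlockEven B r := blockEven_congr (fun i hi => hag i hi)
    rcases hcs with ⟨he, ha, hb⟩ | ⟨he, ha, hb⟩ <;> rcases hcs' with ⟨he', ha', hb'⟩ | ⟨he', ha', hb'⟩
    · rw [ha] at hb'; exact absurd hb' (by simp)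
    · exact he' (hBE.1 he)
    · exact he (hBE.2 he')
    · rw [ha] at hb'; exact absurd hb' (by simp)
  · exact hne' (hag r' h).symm

lemma seqLT_total {A B : ℕ → Bool} (h : A ≠ B) : SeqLT A B ∨ SeqLT B A := by
  have hex : ∃ i, A i ≠ B i := by
    by_contra hc
    push_neg at hc
    exact h (funext hc)
  classical
  set r := Nat.find hex with hr
  have hne : A r ≠ B r := Nat.find_spec hex
  have hag : ∀ i < r, A i = B i := fun i hi => by
    by_contra hc
    exact Nat.find_min hex hi hc
  have hag' : ∀ i < r, B i = A i := fun i hi => (hag i hi).symm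
  have hBE := blockEven_congr hag
  by_cases hbe : BlockEven A r <;> cases ha : A r
  · have hb : B r = true := by cases hB : B r <;> simp [ha, hB] at hne ⊢
    exact Or.inl ⟨r, hag, hne, Or.inl ⟨hbe, ha, hb⟩⟩
  · have hb : B r = false := by cases hB : B r <;> simp [ha, hB] at hne ⊢
    exact Or.inr ⟨r, hag', hne.symm, Or.inl ⟨(hBE.1 hbe), hb, ha⟩⟩
  · have hb : B r = true := by cases hB : B r <;> simp [ha, hB] at hne ⊢
    exact Or.inr ⟨r, hag', hne.symm, Or.inr ⟨fun hc => hbe (hBE.2 hc), hb, ha⟩⟩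
  · have hb : B r = false := by cases hB : B r <;> simp [ha, hB] at hne ⊢
    exact Or.inl ⟨r, hag, hne, Or.inr ⟨hbe, ha, hb⟩⟩

lemma seqLE_antisymm {A B : ℕ → Bool} (h1 : SeqLE A B) (h2 : SeqLE B A) : A = B := by
  rcases h1 with h1 | h1
  · rcases h2 with h2 | h2
    · exact absurd h2 (fun h => seqLT_asymm h1 h)
    · exact h2.symm
  · exact h1

lemma isPeriodicSeq_mul {A : ℕ → Bool} {m : ℕ} (h : IsPeriodicSeq A m) (c : ℕ) (i : ℕ) :
    A (i + c * m) = A i := by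
  induction c with
  | zero => simp
  | succ c ih =>
      have : i + (c+1) * m = (i + c * m) + m := by ring
      rw [this, h.2, ih]

lemma minPer_le {A : ℕ → Bool} {m : ℕ} (h : IsPeriodicSeq A m) : minPer A ≤ m :=
  Nat.sInf_le h

lemma minPer_isPeriodic {A : ℕ → Bool} {m : ℕ} (h : IsPeriodicSeq A m) :
    IsPeriodicSeq A (minPer A) :=
  Nat.sInf_mem (⟨m, h⟩ : Set.Nonempty {n | IsPeriodicSeq A n})

lemma isPeriodicSeq_sub {A : ℕ → Bool} {a b : ℕ} (ha : IsPeriodicSeq A a)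
    (hb : IsPeriodicSeq A b) (hab : b < a) : IsPeriodicSeq A (a - b) := by
  refine ⟨by omega, fun i => ?_⟩
  have : A (i + (a - b) + b) = A (i + (a-b)) := hb.2 _
  have h2 : i + (a - b) + b = i + a := by omega
  rw [h2] at this
  rw [← this, ha.2]

lemma minPer_dvd {A : ℕ → Bool} : ∀ {m : ℕ}, IsPeriodicSeq A m → minPer A ∣ m := by
  intro m
  induction m using Nat.strong_induction_on with
  | _ m ih =>
    intro h
    have hle : minPer A ≤ m := minPer_le h
    have hper : IsPeriodicSeq A (minPer A) := minPer_isPeriodic h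
    rcases eq_or_lt_of_le hle with he | hlt
    · exact he ▸ dvd_refl _
    · have hsub : IsPeriodicSeq A (m - minPer A) := isPeriodicSeq_sub h hper hlt
      have hpos : 0 < minPer A := hper.1
      have hdvd : minPer A ∣ (m - minPer A) := ih _ (by omega) hsub
      obtain ⟨c, hc⟩ := hdvd
      exact ⟨c + 1, by rw [Nat.mul_add, mul_one, ← hc]; omega⟩

lemma shiftSeq_shiftSeq (a b : ℕ) (A : ℕ → Bool) :
    shiftSeq a (shiftSeq b A) = shiftSeq (a + b) A := by
  funext i
  simp [shiftSeq, add_assoc]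

lemma shiftSeq_of_periodic {A : ℕ → Bool} {m : ℕ} (h : IsPeriodicSeq A m) :
    shiftSeq m A = A := by
  funext i
  exact h.2 i

end SeqLemmas
section ItinLemmas

lemma itinerary_true_iff (g : ℝ → ℝ) (x : ℝ) (i : ℕ) :
    itinerary g x i = true ↔ 0 < g^[i] x := by
  by_cases h : 0 < g^[i] x <;> simp [itinerary, h]

lemma itinerary_false_iff (g : ℝ → ℝ) (x : ℝ) (i : ℕ) :
    itinerary g x i = false ↔ ¬ 0 < g^[i] x := by
  by_cases h : 0 < g^[i] x <;> simp [itinerary, h]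

lemma itinerary_neg (g : ℝ → ℝ) (x : ℝ) (i : ℕ) (h0 : g^[i] x ≠ 0)
    (h : itinerary g x i = false) : g^[i] x < 0 :=
  lt_of_le_of_ne (not_lt.1 ((itinerary_false_iff g x i).1 h)) h0

lemma itinerary_shift (g : ℝ → ℝ) (x : ℝ) (m : ℕ) :
    itinerary g (g^[m] x) = shiftSeq m (itinerary g x) := by
  funext i
  simp only [itinerary, shiftSeq, ← Function.iterate_add_apply]

lemma parity_inv {g : ℝ → ℝ} (hg : Unimodal g) {x y : ℝ}
    (hx0 : ∀ i, g^[i] x ≠ 0) (hy0 : ∀ i, g^[i] y ≠ 0) (hxy : x < y) :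
    ∀ r, (∀ i < r, itinerary g x i = itinerary g y i) →
      ((BlockEven (itinerary g x) r → g^[r] x < g^[r] y) ∧
       (¬ BlockEven (itinerary g x) r → g^[r] y < g^[r] x)) := by
  obtain ⟨hgc, hpos, hneg, h0⟩ := hg
  have mono := umono hgc hpos
  have anti := uanti hgc hneg
  intro r
  induction r with
  | zero =>
      intro _
      exact ⟨fun _ => hxy, fun hne => absurd (blockEven_zero _) hne⟩
  | succ r ih =>
      intro hag
      have ihr := ih (fun i hi => hag i (Nat.lt_succ_of_lt hi))
      have hsym : itinerary g x r = itinerary g y r := hag r (Nat.lt_succ_self r)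
      rw [Function.iterate_succ_apply', Function.iterate_succ_apply']
      cases hA : itinerary g x r with
      | false =>
          have hxr : g^[r] x < 0 := itinerary_neg g x r (hx0 r) hA
          have hyr : g^[r] y < 0 := itinerary_neg g y r (hy0 r) (hsym ▸ hA)
          have hbe := blockEven_succ_false hA
          constructor
          · intro hbe1
            exact mono (le_of_lt hxr) (le_of_lt hyr) (ihr.1 (hbe.1 hbe1))
          · intro hbe1
            exact mono (le_of_lt hyr) (le_of_lt hxr) (ihr.2 (fun hc => hbe1 (hbe.2 hc)))
      | true =>
          have hxr : 0 < g^[r] x := (itinerary_true_iff g x r).1 hA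
          have hyr : 0 < g^[r] y := (itinerary_true_iff g y r).1 (hsym ▸ hA)
          have hbe := blockEven_succ_true hA
          constructor
          · intro hbe1
            exact anti (le_of_lt hyr) (le_of_lt hxr) (ihr.2 (hbe.1 hbe1))
          · intro hbe1
            have : BlockEven (itinerary g x) r := by
              by_contra hc
              exact hbe1 (hbe.2 hc)
            exact anti (le_of_lt hxr) (le_of_lt hyr) (ihr.1 this)

lemma itin_seqLT {g : ℝ → ℝ} (hg : Unimodal g) {x y : ℝ}
    (hx0 : ∀ i, g^[i] x ≠ 0) (hy0 : ∀ i, g^[i] y ≠ 0) (hxy : x < y)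
    (hne : itinerary g x ≠ itinerary g y) :
    SeqLT (itinerary g x) (itinerary g y) := by
  classical
  have hex : ∃ i, itinerary g x i ≠ itinerary g y i := by
    by_contra hc
    push_neg at hc
    exact hne (funext hc)
  set r := Nat.find hex with hr
  have hAB : itinerary g x r ≠ itinerary g y r := Nat.find_spec hex
  have hag : ∀ i < r, itinerary g x i = itinerary g y i := fun i hi => by
    by_contra hc
    exact Nat.find_min hex hi hc
  have inv := parity_inv hg hx0 hy0 hxy r hag
  by_cases hbe : BlockEven (itinerary g x) r
  · have hlt : g^[r] x < g^[r] y := inv.1 hbe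
    have ha : itinerary g x r = false := by
      cases hA : itinerary g x r
      · rfl
      · have hx' : 0 < g^[r] x := (itinerary_true_iff g x r).1 hA
        have : itinerary g y r = true := (itinerary_true_iff g y r).2 (lt_trans hx' hlt)
        rw [hA] at hAB; simp [this] at hAB
    have hb : itinerary g y r = true := by
      cases hB : itinerary g y r
      · have hy' : g^[r] y < 0 := itinerary_neg g y r (hy0 r) hB
        have : itinerary g x r = false := (itinerary_false_iff g x r).2 (by linarith)
        rw [hB] at hAB; simp [this] at hAB
      · rfl
    exact ⟨r, hag, hAB, Or.inl ⟨hbe, ha, hb⟩⟩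
  · have hlt : g^[r] y < g^[r] x := inv.2 hbe
    have ha : itinerary g x r = true := by
      cases hA : itinerary g x r
      · have hx' : g^[r] x < 0 := itinerary_neg g x r (hx0 r) hA
        have : itinerary g y r = false := (itinerary_false_iff g y r).2 (by linarith)
        rw [hA] at hAB; simp [this] at hAB
      · rfl
    have hb : itinerary g y r = false := by
      cases hB : itinerary g y r
      · rfl
      · have hy' : 0 < g^[r] y := (itinerary_true_iff g y r).1 hB
        have : itinerary g x r = true := (itinerary_true_iff g x r).2 (by linarith)
        rw [hB] at hAB; simp [this] at hAB
    exact ⟨r, hag, hAB, Or.inr ⟨hbe, ha, hb⟩⟩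

lemma same_itin_blockEven {g : ℝ → ℝ} (hg : Unimodal g) {x y : ℝ}
    (hx0 : ∀ i, g^[i] x ≠ 0) (hy0 : ∀ i, g^[i] y ≠ 0) (hxy : x ≠ y)
    (hsame : itinerary g x = itinerary g y) {k : ℕ}
    (hx : g^[k] x = x) (hy : g^[k] y = y) :
    BlockEven (itinerary g x) k := by
  rcases lt_or_gt_of_ne hxy with h | h
  · by_contra hbe
    have := (parity_inv hg hx0 hy0 h k (fun i _ => congrFun hsame i)).2 hbe
    rw [hx, hy] at this
    exact absurd h (not_lt.2 (le_of_lt this))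
  · by_contra hbe
    have hbe' : ¬ BlockEven (itinerary g y) k := fun hc => hbe (by
      rwa [blockEven_congr (fun i _ => congrFun hsame i)])
    have := (parity_inv hg hy0 hx0 h k (fun i _ => (congrFun hsame i).symm)).2 hbe'
    rw [hx, hy] at this
    exact absurd h (not_lt.2 (le_of_lt this))

end ItinLemmas
section DynLemmas

/-- The parameter-space domain. -/
def Tset : Set (ℝ × ℝ) := Set.Icc (0:ℝ) 1 ×ˢ Set.univ

/-- Iterates as functions of `(t, x)`. -/
def Fit (f : ℝ → ℝ → ℝ) (m : ℕ) (v : ℝ × ℝ) : ℝ := (f v.1)^[m] v.2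

lemma Fit_contOn {f : ℝ → ℝ → ℝ}
    (hcont : ContinuousOn (fun p : ℝ × ℝ => f p.1 p.2) Tset) (m : ℕ) :
    ContinuousOn (Fit f m) Tset := by
  induction m with
  | zero =>
      exact continuousOn_snd
  | succ m ih =>
      have heq : Fit f (m+1) = (fun p : ℝ × ℝ => f p.1 p.2) ∘ (fun v => (v.1, Fit f m v)) := by
        funext v
        simp [Fit, Function.iterate_succ_apply']
      rw [heq]
      apply hcont.comp (continuousOn_fst.prodMk ih)
      intro v hv
      exact ⟨hv.1, trivial⟩

lemma same_sign_nbhd {g : ℝ × ℝ → ℝ} {S : Set (ℝ × ℝ)} (hg : ContinuousOn g S)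
    {v : ℝ × ℝ} (hv : v ∈ S) (h0 : g v ≠ 0) :
    ∃ δ > 0, ∀ w ∈ S, dist w v < δ → (g w ≠ 0 ∧ (0 < g w ↔ 0 < g v)) := by
  have hc := hg v hv
  rw [Metric.continuousWithinAt_iff] at hc
  obtain ⟨δ, hδ, hd⟩ := hc (|g v|) (abs_pos.2 h0)
  refine ⟨δ, hδ, fun w hw hdist => ?_⟩
  have h1 : |g w - g v| < |g v| := by
    have := hd hw hdist
    rwa [Real.dist_eq] at this
  have h2 := abs_lt.1 h1
  rcases lt_or_gt_of_ne h0 with h | h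
  · rw [abs_of_neg h] at h2
    constructor
    · intro hgw; rw [hgw] at h2; linarith [h2.2]
    · constructor
      · intro hgw; linarith [h2.2]
      · intro hgw; linarith
  · rw [abs_of_pos h] at h2
    constructor
    · intro hgw; rw [hgw] at h2; linarith [h2.1]
    · constructor
      · intro _; exact h
      · intro _; linarith [h2.1]

lemma approx_nbhd {g : ℝ × ℝ → ℝ} {S : Set (ℝ × ℝ)} (hg : ContinuousOn g S)
    {v : ℝ × ℝ} (hv : v ∈ S) {ε : ℝ} (hε : 0 < ε) :
    ∃ δ > 0, ∀ w ∈ S, dist w v < δ → |g w - g v| < ε := by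
  have hc := hg v hv
  rw [Metric.continuousWithinAt_iff] at hc
  obtain ⟨δ, hδ, hd⟩ := hc ε hε
  exact ⟨δ, hδ, fun w hw hdist => by
    have := hd hw hdist
    rwa [Real.dist_eq] at this⟩

lemma iterate_fix_mul {g : ℝ → ℝ} {x : ℝ} {N : ℕ} (hN : g^[N] x = x) :
    ∀ c, g^[N * c] x = x := by
  intro c
  induction c with
  | zero => simp
  | succ c ih =>
      have : N * (c+1) = N * c + N := by ring
      rw [this, Function.iterate_add_apply, hN, ih]

lemma iterate_mod_fix {g : ℝ → ℝ} {x : ℝ} {N : ℕ} (hN : g^[N] x = x) (l : ℕ) :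
    g^[l] x = g^[l % N] x := by
  rcases Nat.eq_zero_or_pos N with h | h
  · subst h; simp
  · have hl : l = l % N + N * (l / N) := by rw [Nat.mod_add_div]
    conv_lhs => rw [hl]
    rw [Function.iterate_add_apply, iterate_fix_mul hN]

lemma iterate_eq_sub_fix {g : ℝ → ℝ} {x : ℝ} {N i j : ℕ} (hN : g^[N] x = x)
    (hNpos : 0 < N) (hij : i ≤ j) (he : g^[i] x = g^[j] x) : g^[j - i] x = x := by
  have hi : i ≤ N * i := Nat.le_mul_of_pos_left i hNpos
  calc g^[j-i] x = g^[j-i] (g^[N*i] x) := by rw [iterate_fix_mul hN]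
  _ = g^[(j-i) + N*i] x := (Function.iterate_add_apply g (j-i) (N*i) x).symm
  _ = g^[(N*i - i) + j] x := by rw [show (j-i) + N*i = (N*i - i) + j by omega]
  _ = g^[N*i - i] (g^[j] x) := Function.iterate_add_apply g _ j x
  _ = g^[N*i - i] (g^[i] x) := by rw [← he]
  _ = g^[(N*i - i) + i] x := (Function.iterate_add_apply g _ i x).symm
  _ = g^[N*i] x := by rw [show (N*i - i) + i = N*i by omega]
  _ = x := iterate_fix_mul hN i

lemma uderiv_pos_lt {g : ℝ → ℝ} (hg : Unimodal g) {y : ℝ} (h : 0 < deriv g y) : y < 0 := by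
  obtain ⟨_, _, hneg, h0⟩ := hg
  rcases lt_trichotomy y 0 with hy | hy | hy
  · exact hy
  · rw [hy, h0] at h; linarith
  · linarith [hneg y hy]

lemma uderiv_neg_gt {g : ℝ → ℝ} (hg : Unimodal g) {y : ℝ} (h : deriv g y < 0) : 0 < y := by
  obtain ⟨_, hpos, _, h0⟩ := hg
  rcases lt_trichotomy y 0 with hy | hy | hy
  · linarith [hpos y hy]
  · rw [hy, h0] at h; linarith
  · exact hy

lemma uderiv_ne {g : ℝ → ℝ} (hg : Unimodal g) {y : ℝ} (h : y ≠ 0) : deriv g y ≠ 0 := by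
  rcases lt_or_gt_of_ne h with hy | hy
  · exact ne_of_gt (hg.2.1 y hy)
  · exact ne_of_lt (hg.2.2.1 y hy)

end DynLemmas
section ConstLemmas

lemma cross_const {f : ℝ → ℝ → ℝ}
    (hcont : ContinuousOn (fun p : ℝ × ℝ => f p.1 p.2) Tset)
    {V : Set (ℝ × ℝ)} (hVpre : IsPreconnected V) (hVT : V ⊆ Tset)
    (i j : ℕ) (hne : ∀ v ∈ V, Fit f i v ≠ Fit f j v) :
    (∀ v ∈ V, 0 < Fit f i v - Fit f j v) ∨ (∀ v ∈ V, Fit f i v - Fit f j v < 0) := by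
  have hgc : ContinuousOn (fun v => Fit f i v - Fit f j v) Tset :=
    (Fit_contOn hcont i).sub (Fit_contOn hcont j)
  have := preconn_dichotomy (U₁ := {v : ℝ × ℝ | 0 < Fit f i v - Fit f j v})
    (U₂ := {v : ℝ × ℝ | Fit f i v - Fit f j v < 0}) hVpre
    (fun v hv => by
      rcases lt_or_gt_of_ne (sub_ne_zero.2 (hne v hv)) with h | h
      · exact Or.inr h
      · exact Or.inl h)
    (fun v _ h1 h2 => by simp only [Set.mem_setOf_eq] at h1 h2; linarith)
    (fun v hv h1 => by
      obtain ⟨δ, hδ, hs⟩ := same_sign_nbhd hgc (hVT hv) (by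
        simp only [Set.mem_setOf_eq] at h1; exact ne_of_gt h1)
      exact ⟨δ, hδ, fun w hw hd => by
        have := hs w (hVT hw) hd
        simp only [Set.mem_setOf_eq] at h1 ⊢
        exact this.2.2 h1⟩)
    (fun v hv h1 => by
      obtain ⟨δ, hδ, hs⟩ := same_sign_nbhd hgc (hVT hv) (by
        simp only [Set.mem_setOf_eq] at h1; exact ne_of_lt h1)
      exact ⟨δ, hδ, fun w hw hd => by
        have := hs w (hVT hw) hd
        simp only [Set.mem_setOf_eq] at h1 ⊢
        rcases lt_or_gt_of_ne this.1 with h | h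
        · exact h
        · exact absurd (this.2.1 h) (by linarith)⟩)
  rcases this with h | h
  · exact Or.inl h
  · exact Or.inr h

/-- The locally stable positivity condition for the pair-sign constants. -/
def Cpm (f : ℝ → ℝ → ℝ) (k i : ℕ) (s : Bool) (v : ℝ × ℝ) : Prop :=
  (Fit f k v = v.2 → (0 < deriv (f v.1) (Fit f i v) ↔ s = true)) ∧
  (Fit f k v ≠ v.2 →
    (0 < (Fit f (i+1) v - Fit f (i+k+1) v) * (Fit f i v - Fit f (i+k) v) ↔ s = true))

lemma cconst_main {f : ℝ → ℝ → ℝ}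
    (hUni : ∀ t ∈ Set.Icc (0:ℝ) 1, Unimodal (f t))
    (hcont : ContinuousOn (fun p : ℝ × ℝ => f p.1 p.2) Tset)
    (hdcont : ContinuousOn (fun p : ℝ × ℝ => deriv (f p.1) p.2) Tset)
    {V : Set (ℝ × ℝ)} (hVpre : IsPreconnected V) (hVT : V ⊆ Tset)
    (k : ℕ)
    (hhalf : ∀ v ∈ V, Fit f k v = v.2 → ∀ j : ℕ, Fit f j v ≠ 0)
    (hfull : ∀ v ∈ V, Fit f k v ≠ v.2 → ∀ l : ℕ, Fit f l v ≠ Fit f (l+k) v)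
    (i : ℕ) :
    (∀ v ∈ V, Cpm f k i true v) ∨ (∀ v ∈ V, Cpm f k i false v) := by
  -- basic continuity facts
  have hFi := Fit_contOn hcont i
  have hFik := Fit_contOn hcont (i+k)
  have hgk : ContinuousOn (fun v : ℝ × ℝ => Fit f k v - v.2) Tset :=
    (Fit_contOn hcont k).sub continuousOn_snd
  have hprod : ContinuousOn
      (fun v => (Fit f (i+1) v - Fit f (i+k+1) v) * (Fit f i v - Fit f (i+k) v)) Tset :=
    ((Fit_contOn hcont (i+1)).sub (Fit_contOn hcont (i+k+1))).mul
      (hFi.sub hFik)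
  -- identities at half points
  have hhalfeq : ∀ v : ℝ × ℝ, Fit f k v = v.2 → ∀ l : ℕ, Fit f (l+k) v = Fit f l v := by
    intro v hv l
    show (f v.1)^[l+k] v.2 = (f v.1)^[l] v.2
    rw [Function.iterate_add_apply]
    exact congrArg _ hv
  -- MVT consequence at full points near a half point
  -- main openness argument, done for each polarity at once
  have hopen : ∀ (s : Bool), ∀ v ∈ V, Cpm f k i s v →
      ∃ δ > 0, ∀ w ∈ V, dist w v < δ → Cpm f k i s w := by
    intro s v hvV hvC
    by_cases hv2 : Fit f k v = v.2
    · -- half case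
      have hvT := hVT hvV
      have hd0 : deriv (f v.1) (Fit f i v) ≠ 0 :=
        uderiv_ne (hUni v.1 hvT.1) (hhalf v hvV hv2 i)
      have hmemT : (v.1, Fit f i v) ∈ Tset := ⟨hvT.1, trivial⟩
      obtain ⟨δ₁, hδ₁, hball⟩ := same_sign_nbhd hdcont hmemT hd0
      -- approximate Fit i and Fit (i+k)
      obtain ⟨δ₂, hδ₂, happ₂⟩ := approx_nbhd hFi hvT (half_pos hδ₁)
      obtain ⟨δ₃, hδ₃, happ₃⟩ := approx_nbhd hFik hvT (half_pos hδ₁)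
      refine ⟨min (min δ₂ δ₃) (δ₁/2), by positivity, fun w hwV hdist => ?_⟩
      have hwT := hVT hwV
      have hd₂ : |Fit f i w - Fit f i v| < δ₁/2 :=
        happ₂ w hwT (lt_of_lt_of_le hdist (by
          exact le_trans (min_le_left _ _) (min_le_left _ _)))
      have hd₃ : |Fit f (i+k) w - Fit f (i+k) v| < δ₁/2 :=
        happ₃ w hwT (lt_of_lt_of_le hdist (by
          exact le_trans (min_le_left _ _) (min_le_right _ _)))
      have hteq : dist w.1 v.1 < δ₁/2 := by
        have : dist w.1 v.1 ≤ dist w v := by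
          rw [Prod.dist_eq]; exact le_max_left _ _
        exact lt_of_le_of_lt this (lt_of_lt_of_le hdist (min_le_right _ _))
      have hvik : Fit f (i+k) v = Fit f i v := hhalfeq v hv2 i
      -- any point within δ₁/2 of Fit f i v has derivative of correct sign
      have hsign : ∀ y : ℝ, |y - Fit f i v| < δ₁ →
          (deriv (f w.1) y ≠ 0 ∧ (0 < deriv (f w.1) y ↔ 0 < deriv (f v.1) (Fit f i v))) := by
        intro y hy
        apply hball (w.1, y) ⟨hwT.1, trivial⟩
        rw [Prod.dist_eq]
        simp only [max_lt_iff]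
        constructor
        · rw [Real.dist_eq] at hteq ⊢; linarith
        · rw [Real.dist_eq]; linarith [hy]
      have hvsign : (0 < deriv (f v.1) (Fit f i v) ↔ s = true) := hvC.1 hv2
      constructor
      · -- w half
        intro hw2
        have : |Fit f i w - Fit f i v| < δ₁ := by linarith [hd₂]
        rw [← hvsign]
        exact (hsign _ this).2
      · -- w full
        intro hw2
        have hab : Fit f i w ≠ Fit f (i+k) w := hfull w hwV hw2 i
        have hgw : ContDiff ℝ 1 (f w.1) := (hUni w.1 hwT.1).1
        obtain ⟨ξ, hξmem, hξeq⟩ := mvt_pair hgw hab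
        have h1 : Fit f (i+1) w = f w.1 (Fit f i w) := by
          show (f w.1)^[i+1] w.2 = _
          rw [Function.iterate_succ_apply']
          rfl
        have h2 : Fit f (i+k+1) w = f w.1 (Fit f (i+k) w) := by
          show (f w.1)^[i+k+1] w.2 = _
          rw [Function.iterate_succ_apply']
          rfl
        have hξv : |ξ - Fit f i v| < δ₁ := by
          have hmin : min (Fit f i w) (Fit f (i+k) w) < ξ := hξmem.1
          have hmax : ξ < max (Fit f i w) (Fit f (i+k) w) := hξmem.2
          have e2 : |Fit f (i+k) w - Fit f i v| < δ₁/2 := by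
            rw [hvik] at hd₃; exact hd₃
          rw [abs_lt] at hd₂ e2 ⊢
          constructor
          · rcases min_cases (Fit f i w) (Fit f (i+k) w) with ⟨hm, _⟩ | ⟨hm, _⟩ <;>
              rw [hm] at hmin <;> linarith
          · rcases max_cases (Fit f i w) (Fit f (i+k) w) with ⟨hm, _⟩ | ⟨hm, _⟩ <;>
              rw [hm] at hmax <;> linarith
        have hds := hsign ξ hξv
        have hprodeq : (Fit f (i+1) w - Fit f (i+k+1) w) * (Fit f i w - Fit f (i+k) w)
            = deriv (f w.1) ξ * (Fit f i w - Fit f (i+k) w)^2 := by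
          rw [h1, h2, hξeq]; ring
        rw [hprodeq, ← hvsign]
        have hsq : 0 < (Fit f i w - Fit f (i+k) w)^2 := by
          have := sub_ne_zero.2 hab
          positivity
        constructor
        · intro hp
          have : 0 < deriv (f w.1) ξ := by nlinarith
          exact hds.2.1 this
        · intro hp
          have : 0 < deriv (f w.1) ξ := hds.2.2 hp
          nlinarith
    · -- full case
      have hvT := hVT hvV
      have hne2 : Fit f k v - v.2 ≠ 0 := sub_ne_zero.2 hv2
      obtain ⟨δ₁, hδ₁, hb₁⟩ := same_sign_nbhd hgk hvT hne2
      have hpne : (Fit f (i+1) v - Fit f (i+k+1) v) * (Fit f i v - Fit f (i+k) v) ≠ 0 :=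
        mul_ne_zero (sub_ne_zero.2 (by
          have := hfull v hvV hv2 (i+1)
          rw [show i+1+k = i+k+1 by ring] at this
          exact this)) (sub_ne_zero.2 (hfull v hvV hv2 i))
      obtain ⟨δ₂, hδ₂, hb₂⟩ := same_sign_nbhd hprod hvT hpne
      refine ⟨min δ₁ δ₂, by positivity, fun w hwV hdist => ?_⟩
      have hwT := hVT hwV
      have hw2 : Fit f k w ≠ w.2 := by
        have := (hb₁ w hwT (lt_of_lt_of_le hdist (min_le_left _ _))).1
        intro hc
        rw [hc] at this
        simp at this
      constructor
      · intro hc; exact absurd hc hw2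
      · intro _
        have hvfull := hvC.2 hv2
        have := (hb₂ w hwT (lt_of_lt_of_le hdist (min_le_right _ _))).2
        rw [this]
        exact hvfull
  -- cover and disjointness
  have hcov : ∀ v ∈ V, Cpm f k i true v ∨ Cpm f k i false v := by
    intro v hvV
    by_cases hv2 : Fit f k v = v.2
    · have hd0 : deriv (f v.1) (Fit f i v) ≠ 0 :=
        uderiv_ne (hUni v.1 (hVT hvV).1) (hhalf v hvV hv2 i)
      rcases lt_or_gt_of_ne hd0 with h | h
      · exact Or.inr ⟨fun _ => iff_of_false (by linarith) (by simp), fun hc => absurd hv2 hc⟩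
      · exact Or.inl ⟨fun _ => iff_of_true h rfl, fun hc => absurd hv2 hc⟩
    · have hpne : (Fit f (i+1) v - Fit f (i+k+1) v) * (Fit f i v - Fit f (i+k) v) ≠ 0 :=
        mul_ne_zero (sub_ne_zero.2 (by
          have := hfull v hvV hv2 (i+1)
          rw [show i+1+k = i+k+1 by ring] at this
          exact this)) (sub_ne_zero.2 (hfull v hvV hv2 i))
      rcases lt_or_gt_of_ne hpne with h | h
      · exact Or.inr ⟨fun hc => absurd hc hv2, fun _ => iff_of_false (by linarith) (by simp)⟩
      · exact Or.inl ⟨fun hc => absurd hc hv2, fun _ => iff_of_true h rfl⟩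
  have hdisj : ∀ v ∈ V, Cpm f k i true v → Cpm f k i false v → False := by
    intro v hvV h1 h2
    by_cases hv2 : Fit f k v = v.2
    · have ha := (h1.1 hv2).2 rfl
      have hb := (h2.1 hv2).1 ha
      simp at hb
    · have ha := (h1.2 hv2).2 rfl
      have hb := (h2.2 hv2).1 ha
      simp at hb
  exact preconn_dichotomy (U₁ := {v | Cpm f k i true v}) (U₂ := {v | Cpm f k i false v})
    hVpre hcov hdisj (hopen true) (hopen false)

end ConstLemmas
set_option maxHeartbeats 4000000

/-- Let `n` be even and `V` a periodic point component of
`G_n⁻¹(0)` of period `n` with `min { per x | (t,x) ∈ V } = n/2`.  Then: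
(1) any two points `(t₁,p₁), (t₂,p₂) ∈ V` whose minimal periods are `n` have the
same shuffle class (the shuffle of `p₂` equals that of `p₁` or that of
`f_{t₁}^{n/2} p₁`, the latter realizing the `n/2`-shift `γ(σ(p₁))`);
(2) if `(s,p) ∈ V`, the orbit of `p` avoids the critical point `0`, and the
minimal period of `I(p, f_s)` is `n`, then the minimal period of `μ(I(p, f_s))`
is `n/2`. -/
theorem stmt13 (f : ℝ → ℝ → ℝ) (hf : ContFullFamily f)
    (n : ℕ) (hn : 0 < n) (hneven : Even n)
    (V : Set (ℝ × ℝ)) (hV : IsPPComponent f n V) (hVper : CompPeriod f V n)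
    (hmin : IsLeast {j : ℕ | ∃ p ∈ V, Function.minimalPeriod (f p.1) p.2 = j}
      (n / 2)) :
    (∀ t₁ p₁ t₂ p₂ : ℝ, (t₁, p₁) ∈ V → (t₂, p₂) ∈ V →
      Function.minimalPeriod (f t₁) p₁ = n →
      Function.minimalPeriod (f t₂) p₂ = n →
      (SameShuffle (f t₁) (f t₂) p₁ p₂ n ∨
        SameShuffle (f t₁) (f t₂) ((f t₁)^[n / 2] p₁) p₂ n)) ∧
    (∀ s p : ℝ, (s, p) ∈ V → (∀ i : ℕ, (f s)^[i] p ≠ 0) →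
      minPer (itinerary (f s) p) = n →
      2 * minPer (muSeq (itinerary (f s) p)) = n) := by
  classical
  obtain ⟨hUni, hcont, hdcont, _h0, _hh, _hM⟩ := hf
  obtain ⟨k', hk'⟩ := hneven
  have hkn : n / 2 = k' := by omega
  set k := n / 2 with hkdef
  have hkk : n = k + k := by omega
  have hkpos : 0 < k := by omega
  have hkltn : k < n := by omega
  -- V basics
  obtain ⟨v₀, hv₀Z, hVeq⟩ := hV
  have hVsub : V ⊆ Zset f n := by rw [hVeq]; exact connectedComponentIn_subset _ _
  have hVpre : IsPreconnected V := by rw [hVeq]; exact isPreconnected_connectedComponentIn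
  have hVT : V ⊆ Tset := fun v hv => ⟨(hVsub hv).1, trivial⟩
  have hUniV : ∀ v : ℝ × ℝ, v ∈ V → Unimodal (f v.1) := fun v hv => hUni _ (hVT hv).1
  have hnotodd : ¬ Odd n := by
    simp only [Nat.odd_iff, Nat.even_iff.1 ⟨k', hk'⟩]
    omega
  -- dichotomy from G = 0
  have hdich : ∀ v ∈ V,
      (Fit f k v = v.2 ∧ deriv ((f v.1)^[k]) v.2 = -1) ∨
      (Fit f k v ≠ v.2 ∧ Fit f n v = v.2) := by
    intro v hv
    have h := (hVsub hv).2
    rw [Gmap, if_neg hnotodd] at h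
    by_cases hc : (f v.1)^[n / 2] v.2 = v.2
    · rw [if_pos hc] at h
      exact Or.inl ⟨hc, by linarith⟩
    · rw [if_neg hc] at h
      rcases div_eq_zero_iff.1 h with h1 | h1
      · exact Or.inr ⟨hc, sub_eq_zero.1 h1⟩
      · exact absurd (sub_eq_zero.1 h1) hc
  -- minimal period lower bound
  have hmplb : ∀ v ∈ V, k ≤ Function.minimalPeriod (f v.1) v.2 :=
    fun v hv => hmin.2 ⟨v, hv, rfl⟩
  -- classification of points of V
  have hclass : ∀ v ∈ V,
      (Fit f k v = v.2 ∧ deriv ((f v.1)^[k]) v.2 = -1 ∧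
        Function.minimalPeriod (f v.1) v.2 = k) ∨
      (Fit f k v ≠ v.2 ∧ Fit f n v = v.2 ∧
        Function.minimalPeriod (f v.1) v.2 = n) := by
    intro v hv
    rcases hdich v hv with ⟨h1, h2⟩ | ⟨h1, h2⟩
    · left
      refine ⟨h1, h2, ?_⟩
      have hpp : Function.IsPeriodicPt (f v.1) k v.2 := h1
      have hdvd := hpp.minimalPeriod_dvd
      exact le_antisymm (Nat.le_of_dvd hkpos hdvd) (hmplb v hv)
    · right
      refine ⟨h1, h2, ?_⟩
      have hpp : Function.IsPeriodicPt (f v.1) n v.2 := h2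
      have hdvd := hpp.minimalPeriod_dvd
      have hnd : ¬ (Function.minimalPeriod (f v.1) v.2 ∣ k) := by
        intro hc
        exact h1 (Function.isPeriodicPt_iff_minimalPeriod_dvd.2 hc)
      obtain ⟨c, hc⟩ := hdvd
      have hge := hmplb v hv
      set m := Function.minimalPeriod (f v.1) v.2 with hm
      have hcpos : 0 < c := by
        rcases Nat.eq_zero_or_pos c with h' | h'
        · rw [h', Nat.mul_zero] at hc; omega
        · exact h'
      have hcle : c ≤ 2 := by
        by_contra hy
        push_neg at hy
        have h3 : 3 * k ≤ m * c := by
          calc 3 * k ≤ k * 3 := by ring_nf; omega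
          _ ≤ m * c := Nat.mul_le_mul hge hy
        omega
      interval_cases c
      · omega
      · exfalso
        exact hnd ⟨1, by omega⟩
  -- every point of V is fixed by f^[n]
  have hnfix : ∀ v ∈ V, (f v.1)^[n] v.2 = v.2 := by
    intro v hv
    rcases hdich v hv with ⟨h1, _⟩ | ⟨_, h2⟩
    · show (f v.1)^[n] v.2 = v.2
      rw [hkk, Function.iterate_add_apply]
      have h1' : (f v.1)^[k] v.2 = v.2 := h1
      rw [h1', h1']
    · exact h2
  -- the half point q
  obtain ⟨q, hqV, hqmp⟩ := hmin.1
  have hqclass := (hclass q hqV).resolve_right (by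
    rintro ⟨-, -, hmp⟩
    rw [hmp] at hqmp
    omega)
  obtain ⟨hqfix, hqder, hqmpk⟩ := hqclass
  have hqfix' : (f q.1)^[k] q.2 = q.2 := hqfix
  have hqC1 : ContDiff ℝ 1 (f q.1) := (hUniV q hqV).1
  have hqprod : ∏ j ∈ Finset.range k, deriv (f q.1) (Fit f j q) = -1 := by
    simp only [Fit]
    rw [← deriv_iterate_eq hqC1 k q.2]
    exact hqder
  -- orbits of half points avoid 0
  have hhalf0 : ∀ v ∈ V, Fit f k v = v.2 → ∀ j : ℕ, Fit f j v ≠ 0 := by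
    intro v hv hvfix j
    have hvder : deriv ((f v.1)^[k]) v.2 = -1 :=
      ((hclass v hv).resolve_right (fun h => h.1 hvfix)).2.1
    have hvprod : ∏ l ∈ Finset.range k, deriv (f v.1) (Fit f l v) = -1 := by
      simp only [Fit]
      rw [← deriv_iterate_eq (hUniV v hv).1 k v.2]
      exact hvder
    have hmodj : Fit f j v = Fit f (j % k) v := iterate_mod_fix hvfix j
    rw [hmodj]
    intro h0
    have : deriv (f v.1) (Fit f (j % k) v) = 0 := by
      rw [h0]
      exact (hUniV v hv).2.2.2
    have hz : ∏ l ∈ Finset.range k, deriv (f v.1) (Fit f l v) = 0 :=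
      Finset.prod_eq_zero (Finset.mem_range.2 (Nat.mod_lt _ hkpos)) this
    rw [hz] at hvprod
    norm_num at hvprod
  have hqne : ∀ j : ℕ, Fit f j q ≠ 0 := hhalf0 q hqV hqfix
  -- distinctness of orbit points across pair classes
  have hpairne : ∀ v ∈ V, ∀ i j : ℕ, i % k ≠ j % k → Fit f i v ≠ Fit f j v := by
    intro v hv i j hij he
    have hsub : ∀ a b : ℕ, a ≤ b → Fit f a v = Fit f b v → a % k ≠ b % k → False := by
      intro a b hab he' hne'
      have hmp := Function.IsPeriodicPt.minimalPeriod_dvd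
        (f := f v.1) (x := v.2) (n := b - a)
        (iterate_eq_sub_fix (hnfix v hv) hn hab he')
      have hkdvd : k ∣ Function.minimalPeriod (f v.1) v.2 := by
        rcases hclass v hv with ⟨-, -, h⟩ | ⟨-, -, h⟩
        · rw [h]
        · rw [h]; exact ⟨2, by omega⟩
      have : k ∣ b - a := dvd_trans hkdvd hmp
      exact hne' ((Nat.modEq_iff_dvd' hab).2 this)
    rcases le_total i j with hle | hle
    · exact hsub i j hle he hij
    · exact hsub j i hle he.symm (fun h => hij h.symm)
  -- full points never collide with their k-shift
  have hfullpairs : ∀ v ∈ V, Fit f k v ≠ v.2 → ∀ l : ℕ, Fit f l v ≠ Fit f (l+k) v := by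
    intro v hv hvf l he
    have hmpn : Function.minimalPeriod (f v.1) v.2 = n :=
      ((hclass v hv).resolve_left (fun h => hvf h.1)).2.2
    have hfix := iterate_eq_sub_fix (hnfix v hv) hn (Nat.le_add_right l k) he
    rw [Nat.add_sub_cancel_left] at hfix
    have := Function.IsPeriodicPt.minimalPeriod_dvd (f := f v.1) (x := v.2) (n := k) hfix
    rw [hmpn] at this
    have := Nat.le_of_dvd hkpos this
    omega
  -- pair sign constancy constants, expressed through q
  have hCiff : ∀ i : ℕ, ∀ v ∈ V, Fit f k v ≠ v.2 →
      (0 < (Fit f (i+1) v - Fit f (i+k+1) v) * (Fit f i v - Fit f (i+k) v) ↔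
        Fit f i q < 0) := by
    intro i
    rcases cconst_main hUni hcont hdcont hVpre hVT k hhalf0 hfullpairs i with h | h
    · intro v hv hvf
      rw [(h v hv).2 hvf]
      have hq1 : 0 < deriv (f q.1) (Fit f i q) := ((h q hqV).1 hqfix).2 rfl
      exact iff_of_true rfl (uderiv_pos_lt (hUniV q hqV) hq1)
    · intro v hv hvf
      have h2 := (h v hv).2 hvf
      have hq1 : ¬ (0 < deriv (f q.1) (Fit f i q)) := by
        intro hc
        have := ((h q hqV).1 hqfix).1 hc
        simp at this
      have hd0 : deriv (f q.1) (Fit f i q) ≠ 0 :=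
        uderiv_ne (hUniV q hqV) (hqne i)
      have hdn : deriv (f q.1) (Fit f i q) < 0 := lt_of_le_of_ne (not_lt.1 hq1) hd0
      refine iff_of_false (fun hc => by rw [h2] at hc; simp at hc) ?_
      have := uderiv_neg_gt (hUniV q hqV) hdn
      linarith
  -- cross-class order constants
  have hcross : ∀ i j : ℕ, i % k ≠ j % k → ∀ v ∈ V,
      (0 < Fit f i v - Fit f j v ↔ 0 < Fit f i q - Fit f j q) := by
    intro i j hij
    rcases cross_const hcont hVpre hVT i j (fun v hv => hpairne v hv i j hij) with h | h
    · intro v hv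
      exact iff_of_true (h v hv) (h q hqV)
    · intro v hv
      exact iff_of_false (by linarith [h v hv]) (by linarith [h q hqV])
  -- q is k-periodic along the orbit
  have hqshift : ∀ l : ℕ, Fit f (l+k) q = Fit f l q := by
    intro l
    show (f q.1)^[l+k] q.2 = (f q.1)^[l] q.2
    rw [Function.iterate_add_apply, hqfix']
  -- reduction of iterates mod n on V
  have hreduce : ∀ v ∈ V, ∀ l : ℕ, Fit f l v = Fit f (l % n) v :=
    fun v hv l => iterate_mod_fix (hnfix v hv) l
  have hred : ∀ v ∈ V, ∀ l : ℕ, Fit f (l + n) v = Fit f l v := by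
    intro v hv l
    show (f v.1)^[l+n] v.2 = (f v.1)^[l] v.2
    rw [Function.iterate_add_apply, hnfix v hv]
  have hfulln : ∀ v ∈ V, Function.minimalPeriod (f v.1) v.2 = n → Fit f k v ≠ v.2 := by
    intro v hv hmp hc
    have := ((hclass v hv).resolve_right (fun h => h.1 hc)).2.2
    omega
  -- β induction machinery
  have hβstep : ∀ v ∈ V, Fit f k v ≠ v.2 → ∀ i : ℕ,
      ((0 < Fit f (i+1) v - Fit f (i+1+k) v) ↔
        ((0 < Fit f i v - Fit f (i+k) v) ↔ Fit f i q < 0)) := by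
    intro v hv hvf i
    have h := hCiff i v hv hvf
    have ha : Fit f (i+1) v - Fit f (i+k+1) v ≠ 0 := sub_ne_zero.2 (by
      have := hfullpairs v hv hvf (i+1)
      rw [show i+1+k = i+k+1 by ring] at this
      exact this)
    have hb : Fit f i v - Fit f (i+k) v ≠ 0 := sub_ne_zero.2 (hfullpairs v hv hvf i)
    rw [show i+1+k = i+k+1 by ring]
    exact sign_split ha hb h
  constructor
  · -- PART 1
    intro t₁ p₁ t₂ p₂ hv₁ hv₂ hmp₁ hmp₂
    have hfull₁ : Fit f k (t₁, p₁) ≠ (t₁, p₁).2 := hfulln _ hv₁ hmp₁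
    have hfull₂ : Fit f k (t₂, p₂) ≠ (t₂, p₂).2 := hfulln _ hv₂ hmp₂
    have hβind : ∀ i : ℕ,
        (((0 < Fit f i (t₁,p₁) - Fit f (i+k) (t₁,p₁)) ↔
          (0 < Fit f i (t₂,p₂) - Fit f (i+k) (t₂,p₂))) ↔
         ((0 < Fit f 0 (t₁,p₁) - Fit f (0+k) (t₁,p₁)) ↔
          (0 < Fit f 0 (t₂,p₂) - Fit f (0+k) (t₂,p₂)))) := by
      intro i
      induction i with
      | zero => exact Iff.rfl
      | succ i ih =>
          rw [hβstep _ hv₁ hfull₁ i, hβstep _ hv₂ hfull₂ i, iff_cancel]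
          exact ih
    -- nonzero differences
    have hne₁ : ∀ i : ℕ, Fit f i (t₁,p₁) ≠ Fit f (i+k) (t₁,p₁) := hfullpairs _ hv₁ hfull₁
    have hne₂ : ∀ i : ℕ, Fit f i (t₂,p₂) ≠ Fit f (i+k) (t₂,p₂) := hfullpairs _ hv₂ hfull₂
    by_cases hP : ((0 < Fit f 0 (t₁,p₁) - Fit f (0+k) (t₁,p₁)) ↔
          (0 < Fit f 0 (t₂,p₂) - Fit f (0+k) (t₂,p₂)))
    · left
      intro i j hi hj
      show Fit f i (t₁,p₁) < Fit f j (t₁,p₁) ↔ Fit f i (t₂,p₂) < Fit f j (t₂,p₂)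
      by_cases hij : i % k = j % k
      · by_cases hijeq : i = j
        · subst hijeq; simp
        · rcases pair_case hkpos (by omega) (by omega) hijeq hij with hji | hji
          · subst hji
            refine lt_iff_q ?_
            rw [sub_pos_flip (hne₁ i), sub_pos_flip (hne₂ i)]
            exact not_congr ((hβind i).2 hP)
          · subst hji
            exact lt_iff_q ((hβind j).2 hP)
      · exact lt_iff_q ((hcross j i (fun h => hij h.symm) _ hv₁).trans
          (hcross j i (fun h => hij h.symm) _ hv₂).symm)
    · right
      intro i j hi hj
      have hL : ∀ l : ℕ, (f t₁)^[l] ((f t₁)^[k] p₁) = Fit f (l+k) (t₁,p₁) :=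
        fun l => (Function.iterate_add_apply (f t₁) l k p₁).symm
      show (f t₁)^[i] ((f t₁)^[k] p₁) < (f t₁)^[j] ((f t₁)^[k] p₁) ↔
        Fit f i (t₂,p₂) < Fit f j (t₂,p₂)
      rw [hL i, hL j]
      by_cases hij : i % k = j % k
      · by_cases hijeq : i = j
        · subst hijeq; simp
        · rcases pair_case hkpos (by omega) (by omega) hijeq hij with hji | hji
          · subst hji
            -- j = i + k : LHS Fit (i+k) < Fit (i+2k) = Fit i
            have h2k : Fit f (i+k+k) (t₁,p₁) = Fit f i (t₁,p₁) := by
              rw [show i+k+k = i+n by omega]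
              exact hred _ hv₁ i
            rw [h2k]
            have hnP : ¬ ((0 < Fit f i (t₁,p₁) - Fit f (i+k) (t₁,p₁)) ↔
              (0 < Fit f i (t₂,p₂) - Fit f (i+k) (t₂,p₂))) := fun hc => hP ((hβind i).1 hc)
            refine lt_iff_q ?_
            rw [sub_pos_flip (hne₂ i)]
            exact not_iff_right hnP
          · subst hji
            -- i = j + k : LHS Fit (j+2k) = Fit j < Fit (j+k)
            have h2k : Fit f (j+k+k) (t₁,p₁) = Fit f j (t₁,p₁) := by
              rw [show j+k+k = j+n by omega]
              exact hred _ hv₁ j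
            rw [h2k]
            have hnP : ¬ ((0 < Fit f j (t₁,p₁) - Fit f (j+k) (t₁,p₁)) ↔
              (0 < Fit f j (t₂,p₂) - Fit f (j+k) (t₂,p₂))) := fun hc => hP ((hβind j).1 hc)
            refine lt_iff_q ?_
            rw [sub_pos_flip (hne₁ j)]
            exact not_iff_left hnP
      · have hmod : (j+k) % k ≠ (i+k) % k := by
          rw [Nat.add_mod_right, Nat.add_mod_right]
          exact fun h => hij h.symm
        have h1 := hcross (j+k) (i+k) hmod _ hv₁
        rw [hqshift j, hqshift i] at h1
        exact lt_iff_q (h1.trans (hcross j i (fun h => hij h.symm) _ hv₂).symm)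
  · -- PART 2
    intro s p hvV horb hminA
    set A := itinerary (f s) p with hA
    have hUv : Unimodal (f s) := hUniV _ hvV
    have hvfull : Fit f k (s, p) ≠ (s, p).2 := by
      intro hc
      have hckk : (f s)^[k] p = p := hc
      have hper : IsPeriodicSeq A k := by
        refine ⟨hkpos, fun i => ?_⟩
        show itinerary (f s) p (i + k) = itinerary (f s) p i
        have he : (f s)^[i + k] p = (f s)^[i] p := by
          rw [Function.iterate_add_apply, hckk]
        simp only [itinerary, he]
      have := minPer_le hper
      rw [hminA] at this
      omega
    have hnfixp : (f s)^[n] p = p := hnfix _ hvV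
    have hmpn : Function.minimalPeriod (f s) p = n :=
      ((hclass _ hvV).resolve_left (fun h => hvfull h.1)).2.2
    have hAper : IsPeriodicSeq A n := by
      refine ⟨hn, fun i => ?_⟩
      show itinerary (f s) p (i + n) = itinerary (f s) p i
      have he : (f s)^[i + n] p = (f s)^[i] p := by
        rw [Function.iterate_add_apply, hnfixp]
      simp only [itinerary, he]
    have hAmod : ∀ x l : ℕ, A (x + l) = A (x + l % n) := by
      intro x l
      have h1 : x + l = (x + l % n) + (l / n) * n := by
        have := Nat.mod_add_div' l n
        omega
      rw [h1, isPeriodicSeq_mul hAper (l / n)]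
    have hAmod' : ∀ l : ℕ, A l = A (l % n) := fun l => by
      have := hAmod 0 l
      simpa using this
    have hshiftgen : ∀ i j : ℕ, i < j → j < n → shiftSeq i A = shiftSeq j A → False := by
      intro i j hlt hjn heq
      have hi_in : i ≤ i * n := Nat.le_mul_of_pos_right i hn
      have hper : IsPeriodicSeq A (j - i) := by
        refine ⟨by omega, fun l => ?_⟩
        calc A (l + (j-i)) = A (l + (j-i) + i*n) := by
              rw [show l + (j-i) + i*n = (l + (j-i)) + i*n from rfl,
                isPeriodicSeq_mul hAper i]
        _ = A ((l + i*n - i) + j) := by rw [show l + (j-i) + i*n = (l + i*n - i) + j by omega]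
        _ = shiftSeq j A (l + i*n - i) := rfl
        _ = shiftSeq i A (l + i*n - i) := by rw [heq]
        _ = A ((l + i*n - i) + i) := rfl
        _ = A (l + i*n) := by rw [show (l + i*n - i) + i = l + i*n by omega]
        _ = A l := isPeriodicSeq_mul hAper i l
      have := minPer_le hper
      rw [hminA] at this
      omega
    have hshiftne : ∀ i j : ℕ, i < n → j < n → i ≠ j → shiftSeq i A ≠ shiftSeq j A := by
      intro i j hi hj hij heq
      rcases lt_or_gt_of_ne hij with h | h
      · exact hshiftgen i j h hj heq
      · exact hshiftgen j i h hi heq.symm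
    have horb' : ∀ m i : ℕ, (f s)^[i] ((f s)^[m] p) ≠ 0 := by
      intro m i
      rw [← Function.iterate_add_apply]
      exact horb _
    have hIshift : ∀ m : ℕ, itinerary (f s) ((f s)^[m] p) = shiftSeq m A :=
      fun m => itinerary_shift (f s) p m
    -- distinct orbit points
    have hdist : ∀ i j : ℕ, i < n → j < n → i ≠ j → Fit f i (s,p) ≠ Fit f j (s,p) := by
      intro i j hi hj hij he
      have hgen : ∀ a b : ℕ, a < b → b < n → Fit f a (s,p) = Fit f b (s,p) → False := by
        intro a b hab hbn he'
        have hfix := iterate_eq_sub_fix hnfixp hn hab.le he'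
        have hdvd := Function.IsPeriodicPt.minimalPeriod_dvd
          (f := f s) (x := p) (n := b - a) hfix
        rw [hmpn] at hdvd
        have := Nat.le_of_dvd (by omega) hdvd
        omega
      rcases lt_or_gt_of_ne hij with h | h
      · exact hgen i j h hj he
      · exact hgen j i h hi he.symm
    -- argmax of the orbit
    obtain ⟨m₀, hm₀mem, hm₀max⟩ := Finset.exists_max_image (Finset.range n)
      (fun j => Fit f j (s,p)) ⟨0, Finset.mem_range.2 hn⟩
    have hm₀n : m₀ < n := Finset.mem_range.1 hm₀mem
    have hm₀strict : ∀ j : ℕ, j < n → j ≠ m₀ → Fit f j (s,p) < Fit f m₀ (s,p) := by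
      intro j hj hne
      exact lt_of_le_of_ne (hm₀max j (Finset.mem_range.2 hj)) (hdist j m₀ hj hm₀n hne)
    -- maximality of the shift at the argmax
    have hSmax : SeqMaximal (shiftSeq m₀ A) := by
      intro j
      have h1 : shiftSeq j (shiftSeq m₀ A) = shiftSeq ((j + m₀) % n) A := by
        rw [shiftSeq_shiftSeq]
        funext i
        show A (i + (j + m₀)) = A (i + (j + m₀) % n)
        exact hAmod i (j + m₀)
      rw [h1]
      by_cases hr : (j + m₀) % n = m₀
      · right; rw [hr]
      · left
        have hrn : (j + m₀) % n < n := Nat.mod_lt _ hn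
        have hlt : (f s)^[(j + m₀) % n] p < (f s)^[m₀] p := hm₀strict _ hrn hr
        have hne := hshiftne _ m₀ hrn hm₀n hr
        have := itin_seqLT hUv (horb' ((j + m₀) % n)) (horb' m₀) hlt
          (by rw [hIshift, hIshift]; exact hne)
        rw [hIshift, hIshift] at this
        exact this
    -- identification of the sInf
    have hsinf : sInf {m | SeqMaximal (shiftSeq m A)} = m₀ := by
      have hmem : m₀ ∈ {m | SeqMaximal (shiftSeq m A)} := hSmax
      have hspec := Nat.sInf_mem (⟨m₀, hmem⟩ : Set.Nonempty {m | SeqMaximal (shiftSeq m A)})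
      have hle := Nat.sInf_le hmem
      rcases eq_or_lt_of_le hle with he | hlt'
      · exact he
      · exfalso
        set m' := sInf {m | SeqMaximal (shiftSeq m A)} with hm'
        have h1 : SeqLE (shiftSeq m₀ A) (shiftSeq m' A) := by
          have := hspec (m₀ - m')
          rw [shiftSeq_shiftSeq, show m₀ - m' + m' = m₀ by omega] at this
          exact this
        have h2 : SeqLE (shiftSeq m' A) (shiftSeq m₀ A) := by
          have := hSmax (n - m₀ + m')
          rw [shiftSeq_shiftSeq, show n - m₀ + m' + m₀ = m' + n by omega,
            ← shiftSeq_shiftSeq, shiftSeq_of_periodic hAper] at this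
          exact this
        have heq := seqLE_antisymm h2 h1
        exact hshiftne m' m₀ (by omega) hm₀n (by omega) heq
    -- STRADDLE CLASS
    have haddk : ∀ l : ℕ, ((l % n < k) → (l + k) % n = l % n + k) ∧
        ((k ≤ l % n) → (l + k) % n = l % n - k) := fun l => addk_mod hkpos hkk
    have hstrex : ∃ i₀, i₀ < k ∧ A i₀ ≠ A (i₀ + k) := by
      by_contra hc
      push_neg at hc
      have hperk : IsPeriodicSeq A k := by
        refine ⟨hkpos, fun l => ?_⟩
        have hrn : l % n < n := Nat.mod_lt _ hn
        rcases Nat.lt_or_ge (l % n) k with h | h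
        · have h2 : A (l + k) = A (l % n + k) := by rw [hAmod' (l+k), (haddk l).1 h]
          rw [h2, hAmod' l]
          exact (hc (l % n) h).symm
        · have h2 : A (l + k) = A (l % n - k) := by rw [hAmod' (l+k), (haddk l).2 h]
          have h3 : A l = A ((l % n - k) + k) := by rw [hAmod' l]; congr 1; omega
          rw [h2, h3]
          exact hc (l % n - k) (by omega)
      have := minPer_le hperk
      rw [hminA] at this
      omega
    obtain ⟨i₀, hi₀k, hi₀str⟩ := hstrex
    have hstrmod : ∀ l : ℕ, (A l ≠ A (l + k)) ↔ (A (l % k) ≠ A (l % k + k)) := by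
      intro l
      have hrn : l % n < n := Nat.mod_lt _ hn
      have hmm : l % n % k = l % k := Nat.mod_mod_of_dvd l ⟨2, by omega⟩
      rcases Nat.lt_or_ge (l % n) k with h | h
      · have hlk : l % k = l % n := by rw [← hmm, Nat.mod_eq_of_lt h]
        have h2 : A (l + k) = A (l % n + k) := by rw [hAmod' (l+k), (haddk l).1 h]
        rw [hAmod' l, h2, hlk]
      · have hlk : l % k = l % n - k := by
          rw [← hmm, Nat.mod_eq_sub_mod h, Nat.mod_eq_of_lt (by omega)]
        have h2 : A (l + k) = A (l % n - k) := by rw [hAmod' (l+k), (haddk l).2 h]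
        have h3 : A l = A ((l % n - k) + k) := by rw [hAmod' l]; congr 1; omega
        rw [h2, h3, hlk]
        exact ne_comm
    -- straddle pairs have opposite signs
    have hsplit : ∀ l : ℕ, A l ≠ A (l + k) →
        (Fit f l (s,p) < 0 ∧ 0 < Fit f (l+k) (s,p)) ∨
        (Fit f (l+k) (s,p) < 0 ∧ 0 < Fit f l (s,p)) := by
      intro l hl
      cases hAl : A l with
      | false =>
          left
          have h2 : A (l+k) = true := by
            cases hAk : A (l+k) with
            | false => exact absurd (hAl.trans hAk.symm) hl
            | true => rfl
          exact ⟨itinerary_neg (f s) p l (horb l) hAl,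
            (itinerary_true_iff (f s) p (l+k)).1 h2⟩
      | true =>
          right
          have h2 : A (l+k) = false := by
            cases hAk : A (l+k) with
            | false => rfl
            | true => exact absurd (hAl.trans hAk.symm) hl
          exact ⟨itinerary_neg (f s) p (l+k) (horb (l+k)) h2,
            (itinerary_true_iff (f s) p l).1 hAl⟩
    have hstruniq : ∀ j : ℕ, j < k → A j ≠ A (j + k) → j = i₀ := by
      intro j hjk hstr
      by_contra hne'
      have hmodne : j % k ≠ i₀ % k := by
        rw [Nat.mod_eq_of_lt hjk, Nat.mod_eq_of_lt hi₀k]; exact hne'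
      have hj' := hsplit j hstr
      have hi' := hsplit i₀ hi₀str
      have c11 := hcross j i₀ hmodne _ hvV
      have c12 : 0 < Fit f j (s,p) - Fit f (i₀+k) (s,p) ↔ 0 < Fit f j q - Fit f i₀ q := by
        have := hcross j (i₀+k) (by rw [Nat.add_mod_right]; exact hmodne) _ hvV
        rwa [hqshift i₀] at this
      have c21 : 0 < Fit f (j+k) (s,p) - Fit f i₀ (s,p) ↔ 0 < Fit f j q - Fit f i₀ q := by
        have := hcross (j+k) i₀ (by rw [Nat.add_mod_right]; exact hmodne) _ hvV
        rwa [hqshift j] at this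
      have c22 : 0 < Fit f (j+k) (s,p) - Fit f (i₀+k) (s,p) ↔ 0 < Fit f j q - Fit f i₀ q := by
        have := hcross (j+k) (i₀+k) (by rw [Nat.add_mod_right, Nat.add_mod_right]; exact hmodne) _ hvV
        rwa [hqshift j, hqshift i₀] at this
      by_cases he : 0 < Fit f j q - Fit f i₀ q
      · have h11 := c11.2 he
        have h12 := c12.2 he
        have h21 := c21.2 he
        have h22 := c22.2 he
        rcases hj' with ⟨hj1, hj2⟩ | ⟨hj1, hj2⟩ <;> rcases hi' with ⟨hi1, hi2⟩ | ⟨hi1, hi2⟩ <;>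
          linarith
      · have h11 := not_sub_pos_lt (hpairne _ hvV j i₀ hmodne) (fun hcc => he (c11.1 hcc))
        have h12 := not_sub_pos_lt (hpairne _ hvV j (i₀+k)
          (by rw [Nat.add_mod_right]; exact hmodne)) (fun hcc => he (c12.1 hcc))
        have h21 := not_sub_pos_lt (hpairne _ hvV (j+k) i₀
          (by rw [Nat.add_mod_right]; exact hmodne)) (fun hcc => he (c21.1 hcc))
        have h22 := not_sub_pos_lt (hpairne _ hvV (j+k) (i₀+k)
          (by rw [Nat.add_mod_right, Nat.add_mod_right]; exact hmodne)) (fun hcc => he (c22.1 hcc))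
        rcases hj' with ⟨hj1, hj2⟩ | ⟨hj1, hj2⟩ <;> rcases hi' with ⟨hi1, hi2⟩ | ⟨hi1, hi2⟩ <;>
          linarith
    have hstrchar : ∀ l : ℕ, (A l ≠ A (l + k)) ↔ l % k = i₀ := by
      intro l
      rw [hstrmod l]
      constructor
      · intro h
        exact hstruniq _ (Nat.mod_lt _ hkpos) h
      · intro h
        rw [h]
        exact hi₀str
    -- CLASS REPRESENTATIVES AND PAIR VALUES
    have hclassrep : ∀ l : ℕ, l % k = i₀ → l % n = i₀ ∨ l % n = i₀ + k := by
      intro l h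
      have hmm : l % n % k = l % k := Nat.mod_mod_of_dvd l ⟨2, by omega⟩
      exact mod_two_cases hkpos (by have := Nat.mod_lt l hn; omega) (by rw [hmm, h])
    have hsucc : ∀ l : ℕ, Fit f (l+1) (s,p) = f s (Fit f l (s,p)) := by
      intro l
      show (f s)^[l+1] p = _
      rw [Function.iterate_succ_apply']
      rfl
    have hi₀split := hsplit i₀ hi₀str
    have hmono := umono hUv.1 hUv.2.1
    have hanti := uanti hUv.1 hUv.2.2.1
    -- every orbit point is at most the maximum of the two images of the straddle pair
    have hbound : ∀ j : ℕ, j < n →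
        Fit f j (s,p) ≤ max (f s (Fit f i₀ (s,p))) (f s (Fit f (i₀+k) (s,p))) := by
      intro j hj
      obtain ⟨j', hj'n, hj'succ⟩ : ∃ j', j' < n ∧ Fit f (j'+1) (s,p) = Fit f j (s,p) := by
        rcases Nat.eq_zero_or_pos j with h0 | h0
        · refine ⟨n - 1, by omega, ?_⟩
          rw [show n - 1 + 1 = n by omega, h0]
          exact hnfixp
        · exact ⟨j - 1, by omega, by rw [show j - 1 + 1 = j by omega]⟩
      rw [← hj'succ, hsucc j']
      by_cases hcl : j' % k = i₀
      · rcases hclassrep j' hcl with h1 | h1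
        · have he : Fit f j' (s,p) = Fit f i₀ (s,p) := by
            rw [hreduce _ hvV j', h1]
          rw [he]
          exact le_max_left _ _
        · have he : Fit f j' (s,p) = Fit f (i₀+k) (s,p) := by
            rw [hreduce _ hvV j', h1]
          rw [he]
          exact le_max_right _ _
      · have hmodne : j' % k ≠ i₀ % k := by rw [Nat.mod_eq_of_lt hi₀k]; exact hcl
        have c1 := hcross j' i₀ hmodne _ hvV
        have c2 : 0 < Fit f j' (s,p) - Fit f (i₀+k) (s,p) ↔ 0 < Fit f j' q - Fit f i₀ q := by
          have := hcross j' (i₀+k) (by rw [Nat.add_mod_right]; exact hmodne) _ hvV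
          rwa [hqshift i₀] at this
        by_cases he : 0 < Fit f j' q - Fit f i₀ q
        · have h1 := c1.2 he
          have h2 := c2.2 he
          rcases hi₀split with ⟨ha1, ha2⟩ | ⟨ha1, ha2⟩
          · have hlt : f s (Fit f j' (s,p)) < f s (Fit f (i₀+k) (s,p)) :=
              hanti (Set.mem_Ici.2 ha2.le) (Set.mem_Ici.2 (by linarith)) (by linarith)
            exact le_trans hlt.le (le_max_right _ _)
          · have hlt : f s (Fit f j' (s,p)) < f s (Fit f i₀ (s,p)) :=
              hanti (Set.mem_Ici.2 ha2.le) (Set.mem_Ici.2 (by linarith)) (by linarith)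
            exact le_trans hlt.le (le_max_left _ _)
        · have h1 := not_sub_pos_lt (hpairne _ hvV j' i₀ hmodne) (fun hcc => he (c1.1 hcc))
          have h2 := not_sub_pos_lt (hpairne _ hvV j' (i₀+k)
            (by rw [Nat.add_mod_right]; exact hmodne)) (fun hcc => he (c2.1 hcc))
          rcases hi₀split with ⟨ha1, ha2⟩ | ⟨ha1, ha2⟩
          · have hlt : f s (Fit f j' (s,p)) < f s (Fit f i₀ (s,p)) :=
              hmono (Set.mem_Iic.2 (by linarith)) (Set.mem_Iic.2 ha1.le) h1
            exact le_trans hlt.le (le_max_left _ _)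
          · have hlt : f s (Fit f j' (s,p)) < f s (Fit f (i₀+k) (s,p)) :=
              hmono (Set.mem_Iic.2 (by linarith)) (Set.mem_Iic.2 ha1.le) h2
            exact le_trans hlt.le (le_max_right _ _)
    have himg1 : f s (Fit f i₀ (s,p)) = Fit f (i₀+1) (s,p) := (hsucc i₀).symm
    have himg2 : f s (Fit f (i₀+k) (s,p)) = Fit f (i₀+k+1) (s,p) := (hsucc (i₀+k)).symm
    have horbit_le : ∀ l : ℕ, Fit f l (s,p) ≤ Fit f m₀ (s,p) := by
      intro l
      rw [hreduce _ hvV l]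
      exact hm₀max _ (Finset.mem_range.2 (Nat.mod_lt _ hn))
    have hm₀val : Fit f m₀ (s,p) = max (Fit f (i₀+1) (s,p)) (Fit f (i₀+k+1) (s,p)) := by
      apply le_antisymm
      · have := hbound m₀ hm₀n
        rwa [himg1, himg2] at this
      · exact max_le (horbit_le _) (horbit_le _)
    have hm₀mod : m₀ % k = (i₀ + 1) % k := by
      rcases max_cases (Fit f (i₀+1) (s,p)) (Fit f (i₀+k+1) (s,p)) with ⟨hmx, _⟩ | ⟨hmx, _⟩
      · have heq : Fit f m₀ (s,p) = Fit f ((i₀+1) % n) (s,p) := by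
          rw [hm₀val, hmx, ← hreduce _ hvV (i₀+1)]
        have h2 : m₀ = (i₀+1) % n := by
          by_contra hne'
          exact hdist m₀ ((i₀+1)%n) hm₀n (Nat.mod_lt _ hn) hne' heq
        rw [h2, Nat.mod_mod_of_dvd _ ⟨2, by omega⟩]
      · have heq : Fit f m₀ (s,p) = Fit f ((i₀+k+1) % n) (s,p) := by
          rw [hm₀val, hmx, ← hreduce _ hvV (i₀+k+1)]
        have h2 : m₀ = (i₀+k+1) % n := by
          by_contra hne'
          exact hdist m₀ _ hm₀n (Nat.mod_lt _ hn) hne' heq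
        rw [h2, Nat.mod_mod_of_dvd _ ⟨2, by omega⟩,
          show i₀+k+1 = (i₀+1) + k by ring, Nat.add_mod_right]
    -- ITINERARY OF THE HALF POINT
    set Aq := itinerary (f q.1) q.2 with hAqdef
    have hAqk : IsPeriodicSeq Aq k := by
      refine ⟨hkpos, fun i => ?_⟩
      show itinerary (f q.1) q.2 (i + k) = itinerary (f q.1) q.2 i
      have he : (f q.1)^[i+k] q.2 = (f q.1)^[i] q.2 := hqshift i
      simp only [itinerary, he]
    have hAqtrue : ∀ l : ℕ, (Aq l = true ↔ 0 < Fit f l q) :=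
      fun l => itinerary_true_iff _ _ l
    have hAqfalse : ∀ l : ℕ, (Aq l = false ↔ Fit f l q < 0) := fun l =>
      ⟨fun h => itinerary_neg (f q.1) q.2 l (hqne l) h,
       fun h => (itinerary_false_iff (f q.1) q.2 l).2 (not_lt.2 h.le)⟩
    -- THE KEY VALUE IDENTITY
    have hkey : ∀ l : ℕ, (if (l + 1) % n = m₀ then !(A l) else A l) = Aq l := by
      intro l
      have hab : Fit f l (s,p) ≠ Fit f (l+k) (s,p) := hfullpairs _ hvV hvfull l
      obtain ⟨ξ, hξmem, hξeq⟩ := mvt_pair hUv.1 hab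
      have hd1 : Fit f (l+1) (s,p) - Fit f (l+k+1) (s,p) =
          deriv (f s) ξ * (Fit f l (s,p) - Fit f (l+k) (s,p)) := by
        rw [hsucc l, hsucc (l+k)]
        exact hξeq
      have hprodiff := hCiff l _ hvV hvfull
      rw [hd1] at hprodiff
      set D := Fit f l (s,p) - Fit f (l+k) (s,p) with hD
      have hDne : D ≠ 0 := sub_ne_zero.2 hab
      have hD2 : 0 < D * D := by
        rcases lt_or_gt_of_ne hDne with h' | h' <;> nlinarith
      have hprodiff2 : (0 < deriv (f s) ξ ↔ Fit f l q < 0) := by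
        rw [← hprodiff]
        constructor
        · intro h
          nlinarith
        · intro h
          nlinarith
      by_cases hstr2 : l % k = i₀
      · -- straddle case
        have hstrl : A l ≠ A (l + k) := (hstrchar l).2 hstr2
        have hm₀l : Fit f m₀ (s,p) = max (Fit f (l+1) (s,p)) (Fit f (l+k+1) (s,p)) := by
          rcases hclassrep l hstr2 with h1 | h1
          · have e1 : Fit f l (s,p) = Fit f i₀ (s,p) := by rw [hreduce _ hvV l, h1]
            have e2 : Fit f (l+k) (s,p) = Fit f (i₀+k) (s,p) := by
              rw [hreduce _ hvV (l+k), (haddk l).1 (by omega), h1]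
            rw [hm₀val, hsucc l, hsucc (l+k), e1, e2, himg1, himg2]
          · have e1 : Fit f l (s,p) = Fit f (i₀+k) (s,p) := by rw [hreduce _ hvV l, h1]
            have e2 : Fit f (l+k) (s,p) = Fit f i₀ (s,p) := by
              rw [hreduce _ hvV (l+k), (haddk l).2 (by omega), h1,
                show i₀ + k - k = i₀ by omega]
            rw [hm₀val, hsucc l, hsucc (l+k), e1, e2, himg1, himg2, max_comm]
        have hDne2 : Fit f (l+1) (s,p) ≠ Fit f (l+k+1) (s,p) := by
          have := hfullpairs _ hvV hvfull (l+1)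
          rwa [show l+1+k = l+k+1 by ring] at this
        have hflip : ((l + 1) % n = m₀) ↔ Fit f (l+k+1) (s,p) < Fit f (l+1) (s,p) := by
          constructor
          · intro h
            have he2 : Fit f (l+1) (s,p) = Fit f m₀ (s,p) := by
              rw [hreduce _ hvV (l+1), h]
            rcases max_cases (Fit f (l+1) (s,p)) (Fit f (l+k+1) (s,p)) with ⟨hmx, hge⟩ | ⟨hmx, hgt⟩
            · exact lt_of_le_of_ne hge (fun hcc => hDne2 hcc.symm)
            · exfalso
              apply hDne2
              rw [he2, hm₀l, hmx]
          · intro h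
            have hmx : Fit f m₀ (s,p) = Fit f (l+1) (s,p) := by
              rw [hm₀l, max_eq_left h.le]
            have h2 : Fit f ((l+1) % n) (s,p) = Fit f m₀ (s,p) := by
              rw [← hreduce _ hvV (l+1), hmx]
            by_contra hne'
            exact hdist _ _ (Nat.mod_lt _ hn) hm₀n hne' h2
        rcases hsplit l hstrl with ⟨ha1, ha2⟩ | ⟨ha1, ha2⟩
        · have hAl : A l = false := (itinerary_false_iff (f s) p l).2 (not_lt.2 ha1.le)
          have hDneg : D < 0 := by rw [hD]; linarith
          by_cases hcond : (l + 1) % n = m₀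
          · rw [if_pos hcond, hAl, Bool.not_false]
            have hgt := hflip.1 hcond
            have hdD : 0 < deriv (f s) ξ * D := by rw [← hd1]; linarith
            have hdneg : deriv (f s) ξ < 0 := by nlinarith
            have hnl : ¬ (Fit f l q < 0) := fun hcc => absurd (hprodiff2.2 hcc) (by linarith)
            have hq0 : 0 < Fit f l q := lt_of_le_of_ne (not_lt.1 hnl) (Ne.symm (hqne l))
            exact ((hAqtrue l).2 hq0).symm
          · rw [if_neg hcond, hAl]
            have hle2 : Fit f (l+1) (s,p) < Fit f (l+k+1) (s,p) :=
              lt_of_le_of_ne (not_lt.1 (fun hcc => hcond (hflip.2 hcc))) hDne2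
            have hdD : deriv (f s) ξ * D < 0 := by rw [← hd1]; linarith
            have hdpos : 0 < deriv (f s) ξ := by nlinarith
            have hq0 : Fit f l q < 0 := hprodiff2.1 hdpos
            exact ((hAqfalse l).2 hq0).symm
        · have hAl : A l = true := (itinerary_true_iff (f s) p l).2 ha2
          have hDpos : 0 < D := by rw [hD]; linarith
          by_cases hcond : (l + 1) % n = m₀
          · rw [if_pos hcond, hAl, Bool.not_true]
            have hgt := hflip.1 hcond
            have hdD : 0 < deriv (f s) ξ * D := by rw [← hd1]; linarith
            have hdpos : 0 < deriv (f s) ξ := by nlinarith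
            have hq0 : Fit f l q < 0 := hprodiff2.1 hdpos
            exact ((hAqfalse l).2 hq0).symm
          · rw [if_neg hcond, hAl]
            have hle2 : Fit f (l+1) (s,p) < Fit f (l+k+1) (s,p) :=
              lt_of_le_of_ne (not_lt.1 (fun hcc => hcond (hflip.2 hcc))) hDne2
            have hdD : deriv (f s) ξ * D < 0 := by rw [← hd1]; linarith
            have hdneg : deriv (f s) ξ < 0 := by nlinarith
            have hnl : ¬ (Fit f l q < 0) := fun hcc => absurd (hprodiff2.2 hcc) (by linarith)
            have hq0 : 0 < Fit f l q := lt_of_le_of_ne (not_lt.1 hnl) (Ne.symm (hqne l))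
            exact ((hAqtrue l).2 hq0).symm
      · -- non-straddle case
        have hsame : A l = A (l + k) := not_ne_iff.1 (fun hcc => hstr2 ((hstrchar l).1 hcc))
        have hcond : (l + 1) % n ≠ m₀ := by
          intro hcc
          have h1 : (l+1) % k = (i₀ + 1) % k := by
            rw [← hm₀mod, ← hcc, Nat.mod_mod_of_dvd _ ⟨2, by omega⟩]
          have h2 : l % k = i₀ % k := Nat.ModEq.add_right_cancel' 1 h1
          rw [Nat.mod_eq_of_lt hi₀k] at h2
          exact hstr2 h2
        rw [if_neg hcond]
        cases hAl : A l with
        | false =>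
            have ha1 : Fit f l (s,p) < 0 := itinerary_neg (f s) p l (horb l) hAl
            have ha2 : Fit f (l+k) (s,p) < 0 :=
              itinerary_neg (f s) p (l+k) (horb (l+k)) (hsame.symm.trans hAl)
            have hξneg : ξ < 0 := lt_of_lt_of_le hξmem.2 (max_le ha1.le ha2.le)
            have hdpos : 0 < deriv (f s) ξ := hUv.2.1 ξ hξneg
            have hq0 : Fit f l q < 0 := hprodiff2.1 hdpos
            exact ((hAqfalse l).2 hq0).symm
        | true =>
            have ha1 : 0 < Fit f l (s,p) := (itinerary_true_iff (f s) p l).1 hAl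
            have ha2 : 0 < Fit f (l+k) (s,p) :=
              (itinerary_true_iff (f s) p (l+k)).1 (hsame.symm.trans hAl)
            have hξpos : 0 < ξ := lt_of_le_of_lt (le_min ha1.le ha2.le) hξmem.1
            have hdneg : deriv (f s) ξ < 0 := hUv.2.2.1 ξ hξpos
            have hnl : ¬ (Fit f l q < 0) := fun hcc => absurd (hprodiff2.2 hcc) (by linarith)
            have hq0 : 0 < Fit f l q := lt_of_le_of_ne (not_lt.1 hnl) (Ne.symm (hqne l))
            exact ((hAqtrue l).2 hq0).symm
    -- μ(A) coincides with the itinerary of the half point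
    have hcoincide : muSeq A = Aq := by
      have hmu0 : muSeq A = shiftSeq (n - m₀) (flipAt n (shiftSeq m₀ A)) := by
        unfold muSeq
        rw [hminA, hsinf]
      rw [hmu0]
      funext i
      show flipAt n (shiftSeq m₀ A) (i + (n - m₀)) = Aq i
      simp only [flipAt, shiftSeq]
      have hidx : i + (n - m₀) + m₀ = i + n := by omega
      rw [hidx]
      have hcnd : ((i + (n - m₀)) % n = n - 1) ↔ ((i + n + 1) % n = m₀) := by
        have := flip_cond_iff hn hm₀n (i + (n - m₀))
        rwa [show i + (n - m₀) + m₀ + 1 = i + n + 1 by omega] at this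
      have hkey2 := hkey (i + n)
      have hAqshift : Aq (i + n) = Aq i := by
        rw [show i + n = i + 2 * k by omega]
        exact isPeriodicSeq_mul hAqk 2 i
      by_cases hcc : (i + n + 1) % n = m₀
      · rw [if_pos (hcnd.2 hcc)]
        rw [if_pos hcc] at hkey2
        rw [hkey2, hAqshift]
      · rw [if_neg (fun h2 => hcc (hcnd.1 h2))]
        rw [if_neg hcc] at hkey2
        rw [hkey2, hAqshift]
    -- the minimal period of Aq is exactly k
    have hdvd := minPer_dvd hAqk
    have hle := minPer_le hAqk
    have hpos : 0 < minPer Aq := (minPer_isPeriodic hAqk).1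
    have hkfinal : minPer Aq = k := by
      by_contra hne'
      have hlt : minPer Aq < k := lt_of_le_of_ne hle hne'
      have hdper : IsPeriodicSeq Aq (minPer Aq) := minPer_isPeriodic hAqk
      have hy : (f q.1)^[minPer Aq] q.2 ≠ q.2 := by
        intro hc
        have hdvd2 := Function.IsPeriodicPt.minimalPeriod_dvd
          (f := f q.1) (x := q.2) (n := minPer Aq) hc
        rw [hqmpk] at hdvd2
        have := Nat.le_of_dvd hpos hdvd2
        omega
      have hsame2 : itinerary (f q.1) q.2 = itinerary (f q.1) ((f q.1)^[minPer Aq] q.2) := by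
        rw [itinerary_shift]
        funext i
        exact (hdper.2 i).symm
      have hyfix : (f q.1)^[k] ((f q.1)^[minPer Aq] q.2) = (f q.1)^[minPer Aq] q.2 := by
        rw [← Function.iterate_add_apply, show k + minPer Aq = minPer Aq + k by ring,
          Function.iterate_add_apply, hqfix']
      have hbe := same_itin_blockEven (hUniV q hqV) (fun i => hqne i)
        (fun i => by rw [← Function.iterate_add_apply]; exact hqne (i + minPer Aq))
        (fun hc => hy hc.symm) hsame2 hqfix' hyfix
      have hfilter : (Finset.range k).filter (fun j => Aq j = true) =
          (Finset.range k).filter (fun j => deriv (f q.1) (Fit f j q) < 0) := by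
        apply Finset.filter_congr
        intro j _
        constructor
        · intro h
          exact (hUniV q hqV).2.2.1 _ ((hAqtrue j).1 h)
        · intro h
          exact (hAqtrue j).2 (uderiv_neg_gt (hUniV q hqV) h)
      have hppos := prod_pos_iff_even_neg (fun j => deriv (f q.1) (Fit f j q)) k
        (fun j _ => uderiv_ne (hUniV q hqV) (hqne j))
      have hnpos : ¬ (0 < ∏ j ∈ Finset.range k, deriv (f q.1) (Fit f j q)) := by
        rw [hqprod]
        norm_num
      apply hnpos
      apply hppos.2
      rw [← hfilter]
      exact hbe
    rw [hcoincide, hkfinal]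
    omega
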